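/- arXiv:0808.1664 — 8 statements merged into one kernel-verified Lean document; each statement's English description precedes it below -/
import Mathlib

section
/- Let R be a commutative ring in which (4 : R) = 0, let Ṽ be an R-module, let β̃ : Ṽ →ₗ[R] Ṽ →ₗ[R] R be an R-bilinear form, and set ω̃(u,v) = β̃(u,v) − β̃(v,u). Let g : Ṽ →ₗ[R] Ṽ be a linear map satisfying ω̃(g u, g v) = ω̃(u,v) for all u, v ∈ Ṽ, and define α̃ : Ṽ → R by α̃(v) = β̃(g v, g v) − β̃(v, v). Then: (a) α̃(v + 2•x) = α̃(v) for all v, x ∈ Ṽ (so α̃ factors through Ṽ/2Ṽ), and (b) α̃(v₁ + v₂) − α̃(v₁) − α̃(v₂) = 2•β̃(g v₁, g v₂) − 2•β̃(v₁, v₂) for all v₁, v₂ ∈ Ṽ. -/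
/-- For a commutative ring `R` with `4 = 0`, a bilinear form `β̃` on an
`R`-module `Ṽ`, and a linear map `g` preserving `ω̃(u,v) = β̃(u,v) - β̃(v,u)`, the function
`α̃(v) = β̃(g v, g v) - β̃(v, v)` satisfies `α̃(v + 2•x) = α̃(v)` and
`α̃(v₁+v₂) - α̃(v₁) - α̃(v₂) = 2•β̃(g v₁, g v₂) - 2•β̃(v₁, v₂)`. -/
theorem stmt_0 (R : Type*) [CommRing R] (h4 : (4 : R) = 0)
    (V : Type*) [AddCommGroup V] [Module R V]
    (β : V →ₗ[R] V →ₗ[R] R) (g : V →ₗ[R] V)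
    (hg : ∀ u v : V, β (g u) (g v) - β (g v) (g u) = β u v - β v u) :
    (∀ v x : V,
      β (g (v + 2 • x)) (g (v + 2 • x)) - β (v + 2 • x) (v + 2 • x)
        = β (g v) (g v) - β v v) ∧
    (∀ v₁ v₂ : V,
      (β (g (v₁ + v₂)) (g (v₁ + v₂)) - β (v₁ + v₂) (v₁ + v₂))
          - (β (g v₁) (g v₁) - β v₁ v₁) - (β (g v₂) (g v₂) - β v₂ v₂)
        = 2 • β (g v₁) (g v₂) - 2 • β v₁ v₂) := by
  constructor
  · intro v x
    simp only [map_add, map_nsmul, LinearMap.add_apply, LinearMap.smul_apply, smul_eq_mul,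
      nsmul_eq_mul, Nat.cast_ofNat]
    linear_combination 2 * hg v x + 4 * hg x v + (β (g x) (g x) + β x x + β (g v) (g x) + β v x - 2 * (β v x + β x x)) * h4
  · intro v₁ v₂
    simp only [map_add, LinearMap.add_apply, nsmul_eq_mul, Nat.cast_ofNat]
    linear_combination -(hg v₁ v₂)
end

section
/- (Stone–von Neumann property) With the Heisenberg group H(V) as in the context, there exists a finite-dimensional irreducible complex representation π of H(V) such that π(0, z) = ψ(z) • id for all z ∈ A; moreover, any two finite-dimensional irreducible complex representations π₁, π₂ of H(V) satisfying πᵢ(0, z) = ψ(z) • id for all z ∈ A are isomorphic as representations. -/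
open LinearMap Module
set_option linter.unusedSectionVars false
set_option maxHeartbeats 1000000

section rep
variable {V A : Type} [AddCommGroup V] [AddCommGroup A]
variable {β : V → V → A} {ψ : A → ℂˣ}
variable {W : Type} [AddCommGroup W] [Module ℂ W]
variable {π : V × A → W →ₗ[ℂ] W}

lemma beta_zl (hβ₁ : ∀ u u' v : V, β (u + u') v = β u v + β u' v) (v : V) : β 0 v = 0 := by
  have := hβ₁ 0 0 v; simp at this; exact this

lemma beta_zr (hβ₂ : ∀ u v v' : V, β u (v + v') = β u v + β u v') (v : V) : β v 0 = 0 := by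
  have := hβ₂ v 0 0; simp at this; exact this

lemma psi_zero (hψmul : ∀ a b : A, ψ (a + b) = ψ a * ψ b) : ψ 0 = 1 := by
  have := hψmul 0 0; simp at this; exact this

lemma psi_neg (hψmul : ∀ a b : A, ψ (a + b) = ψ a * ψ b) (a : A) : ψ (-a) = (ψ a)⁻¹ := by
  have := hψmul a (-a); rw [add_neg_cancel, psi_zero hψmul] at this
  exact eq_inv_of_mul_eq_one_right this.symm

section withhyp
variable (hβ₁ : ∀ u u' v : V, β (u + u') v = β u v + β u' v)
variable (hβ₂ : ∀ u v v' : V, β u (v + v') = β u v + β u v')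
variable (hψmul : ∀ a b : A, ψ (a + b) = ψ a * ψ b)
variable (hid : π (0, 0) = LinearMap.id)
variable (hmul : ∀ (v₁ : V) (z₁ : A) (v₂ : V) (z₂ : A),
    π (v₁ + v₂, z₁ + z₂ + β v₁ v₂) = π (v₁, z₁) ∘ₗ π (v₂, z₂))
variable (hcc : ∀ z : A, π (0, z) = ((ψ z : ℂ)) • LinearMap.id)

include hβ₁ hmul hcc in
lemma pi_smul (v : V) (z : A) : π (v, z) = ((ψ z : ℂ)) • π (v, 0) := by
  have h := hmul 0 z v 0
  rw [beta_zl hβ₁, zero_add, add_zero, add_zero, hcc] at h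
  rw [h, LinearMap.smul_comp, LinearMap.id_comp]

include hβ₂ hmul hid in
lemma sigma_left (v : V) : π (v, 0) ∘ₗ π (-v, -β v (-v)) = LinearMap.id := by
  have h := hmul v 0 (-v) (-β v (-v))
  rw [add_neg_cancel, zero_add, neg_add_cancel] at h
  rw [← h, hid]

include hβ₁ hβ₂ hmul hid in
lemma sigma_right (v : V) : π (-v, -β v (-v)) ∘ₗ π (v, 0) = LinearMap.id := by
  have h := hmul (-v) (-β v (-v)) v 0
  have e1 : β v (-v) = - β v v := by
    have := hβ₂ v v (-v); rw [add_neg_cancel, beta_zr hβ₂] at this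
    linear_combination (norm := abel) -this
  have e2 : β (-v) v = - β v v := by
    have := hβ₁ v (-v) v; rw [add_neg_cancel, beta_zl hβ₁] at this
    linear_combination (norm := abel) -this
  have hz : -β v (-v) + 0 + β (-v) v = 0 := by rw [e1, e2]; abel
  rw [neg_add_cancel, hz, hid] at h
  exact h.symm

include hβ₁ hβ₂ hmul hid hcc hψmul in
lemma sigma_comp (u v : V) :
    π (-(u+v), -β (u+v) (-(u+v))) ∘ₗ π (u, 0)
      = ((ψ (β u v) : ℂ)) • π (-v, -β v (-v)) := by
  have huv : π (u, 0) ∘ₗ π (v, 0) = π (u + v, β u v) := by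
    have := hmul u 0 v 0; rw [zero_add, zero_add] at this; exact this.symm
  calc π (-(u+v), -β (u+v) (-(u+v))) ∘ₗ π (u, 0)
      = (π (-(u+v), -β (u+v) (-(u+v))) ∘ₗ π (u, 0)) ∘ₗ (π (v,0) ∘ₗ π (-v, -β v (-v))) := by
        rw [sigma_left hβ₂ hid hmul, LinearMap.comp_id]
    _ = (π (-(u+v), -β (u+v) (-(u+v))) ∘ₗ (π (u, 0) ∘ₗ π (v,0))) ∘ₗ π (-v, -β v (-v)) := by
        rw [LinearMap.comp_assoc, LinearMap.comp_assoc, LinearMap.comp_assoc]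
    _ = ((ψ (β u v) : ℂ)) • π (-v, -β v (-v)) := by
        rw [huv, pi_smul hβ₁ hmul hcc (u+v) (β u v), LinearMap.comp_smul,
          sigma_right hβ₁ hβ₂ hid hmul (u+v), LinearMap.smul_comp, LinearMap.id_comp]

include hβ₁ hβ₂ hmul hid hcc hψmul in
lemma trace_vanish [FiniteDimensional ℂ W]
    (hnd : ∀ v : V, v ≠ 0 → ∃ u : V, ψ (β v u - β u v) ≠ 1)
    {v : V} (hv : v ≠ 0) : trace ℂ W (π (v, 0)) = 0 := by
  obtain ⟨u, hu⟩ := hnd v hv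
  set c : A := β u v - β v u with hc
  have hpsic : (ψ c : ℂ) ≠ 1 := by
    intro h1
    have : ψ c = 1 := Units.ext (by simpa using h1)
    have : ψ (β v u - β u v) = 1 := by
      have := congrArg (·⁻¹) this
      simpa [← psi_neg hψmul, hc, neg_sub] using this
    exact hu this
  -- conjugation identity
  have key : π (u, 0) ∘ₗ (π (v, 0) ∘ₗ π (-u, -β u (-u))) = π (v, c) := by
    have h1 : π (u, 0) ∘ₗ π (v, 0) = π (u + v, β u v) := by
      have := hmul u 0 v 0; rw [zero_add, zero_add] at this; exact this.symm
    have h2 : π (u + v, β u v) ∘ₗ π (-u, -β u (-u)) = π (v, c) := by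
      have := hmul (u+v) (β u v) (-u) (-β u (-u))
      have e3 : β (u+v) (-u) = β u (-u) + β v (-u) := hβ₁ u v (-u)
      have e4 : β v (-u) = - β v u := by
        have := hβ₂ v u (-u); rw [add_neg_cancel, beta_zr hβ₂] at this
        linear_combination (norm := abel) -this
      have hco : u + v + -u = v := by abel
      have hzz : β u v + -β u (-u) + β (u+v) (-u) = c := by
        rw [e3, e4, hc]; abel
      rw [hco, hzz] at this; exact this.symm
    rw [← LinearMap.comp_assoc, h1, h2]
  have tr1 : trace ℂ W (π (v, c)) = trace ℂ W (π (v, 0)) := by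
    rw [← key]
    have : π (u, 0) ∘ₗ (π (v, 0) ∘ₗ π (-u, -β u (-u)))
        = π (u, 0) * (π (v, 0) * π (-u, -β u (-u))) := rfl
    rw [this, trace_mul_comm, mul_assoc]
    have : π (-u, -β u (-u)) * π (u, 0) = LinearMap.id := sigma_right hβ₁ hβ₂ hid hmul u
    rw [this]
    congr 1
  rw [pi_smul hβ₁ hmul hcc v c, map_smul] at tr1
  have : ((ψ c : ℂ) - 1) * trace ℂ W (π (v, 0)) = 0 := by
    rw [sub_mul, one_mul, sub_eq_zero]; simpa using tr1
  rcases mul_eq_zero.mp this with h | h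
  · exact absurd (sub_eq_zero.mp h) hpsic
  · exact h

end withhyp
end rep

section model
variable {V A : Type} [AddCommGroup V] [Fintype V] [AddCommGroup A]
variable (β : V → V → A) (ψ : A → ℂˣ)

/-- The model representation on `V → ℂ`. -/
def mdl (h : V × A) : (V → ℂ) →ₗ[ℂ] (V → ℂ) where
  toFun f := fun x => ((ψ h.2 : ℂ) * (ψ (β x h.1) : ℂ)) * f (x + h.1)
  map_add' f g := by funext x; simp [mul_add]
  map_smul' c f := by funext x; simp [smul_eq_mul]; ring

variable {β ψ}
variable (hβ₁ : ∀ u u' v : V, β (u + u') v = β u v + β u' v)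
variable (hβ₂ : ∀ u v v' : V, β u (v + v') = β u v + β u v')
variable (hψmul : ∀ a b : A, ψ (a + b) = ψ a * ψ b)

lemma mdl_apply (h : V × A) (f : V → ℂ) (x : V) :
    mdl β ψ h f x = ((ψ h.2 : ℂ) * (ψ (β x h.1) : ℂ)) * f (x + h.1) := rfl

include hβ₂ hψmul in
lemma mdl_id : mdl β ψ (0, 0) = LinearMap.id := by
  ext f x
  simp [mdl_apply, psi_zero hψmul, beta_zr hβ₂]

include hβ₁ hβ₂ hψmul in
lemma mdl_mul (v₁ : V) (z₁ : A) (v₂ : V) (z₂ : A) :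
    mdl β ψ (v₁ + v₂, z₁ + z₂ + β v₁ v₂) = mdl β ψ (v₁, z₁) ∘ₗ mdl β ψ (v₂, z₂) := by
  ext f x
  simp only [LinearMap.coe_comp, Function.comp_apply, mdl_apply]
  have e1 : (ψ (z₁ + z₂ + β v₁ v₂) : ℂ) = (ψ z₁ : ℂ) * (ψ z₂ : ℂ) * (ψ (β v₁ v₂) : ℂ) := by
    rw [hψmul, hψmul]; push_cast; ring
  have e2 : (ψ (β x (v₁ + v₂)) : ℂ) = (ψ (β x v₁) : ℂ) * (ψ (β x v₂) : ℂ) := by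
    rw [hβ₂, hψmul]; push_cast; ring
  have e3 : (ψ (β (x + v₁) v₂) : ℂ) = (ψ (β x v₂) : ℂ) * (ψ (β v₁ v₂) : ℂ) := by
    rw [hβ₁, hψmul]; push_cast; ring
  rw [e1, e2, e3, add_assoc]
  ring

include hβ₂ hψmul in
lemma mdl_cc (z : A) : mdl β ψ (0, z) = ((ψ z : ℂ)) • LinearMap.id := by
  ext f x
  simp [mdl_apply, beta_zr hβ₂, psi_zero hψmul]

end model

section exist
variable {V A : Type} [AddCommGroup V] [Fintype V] [AddCommGroup A]
variable {β : V → V → A} {ψ : A → ℂˣ}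

lemma existence
    (hβ₁ : ∀ u u' v : V, β (u + u') v = β u v + β u' v)
    (hβ₂ : ∀ u v v' : V, β u (v + v') = β u v + β u v')
    (hψmul : ∀ a b : A, ψ (a + b) = ψ a * ψ b) :
    (∃ (k : ℕ) (π : V × A → ((Fin k → ℂ) →ₗ[ℂ] (Fin k → ℂ))),
      0 < k ∧
      π (0, 0) = LinearMap.id ∧
      (∀ (v₁ : V) (z₁ : A) (v₂ : V) (z₂ : A),
        π (v₁ + v₂, z₁ + z₂ + β v₁ v₂) = π (v₁, z₁) ∘ₗ π (v₂, z₂)) ∧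
      (∀ U : Submodule ℂ (Fin k → ℂ),
        (∀ (h : V × A), ∀ w ∈ U, π h w ∈ U) → U = ⊥ ∨ U = ⊤) ∧
      (∀ z : A, π (0, z) = ((ψ z : ℂ)) • LinearMap.id)) := by
  classical
  set Φ := mdl β ψ with hΦ
  -- invariant nonzero submodules
  set P : ℕ → Prop := fun n => ∃ U : Submodule ℂ (V → ℂ),
      (∀ (h : V × A), ∀ w ∈ U, Φ h w ∈ U) ∧ U ≠ ⊥ ∧ Module.finrank ℂ U = n with hP
  have hPtot : P (Module.finrank ℂ (⊤ : Submodule ℂ (V → ℂ))) := by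
    refine ⟨⊤, fun h w _ => Submodule.mem_top, ?_, rfl⟩
    have : Nontrivial (V → ℂ) := ⟨⟨fun _ => 1, 0, by
      intro hh; have := congrFun hh 0; simp at this⟩⟩
    exact top_ne_bot
  have hex : ∃ n, P n := ⟨_, hPtot⟩
  obtain ⟨U, hUinv, hUne, hUrank⟩ := Nat.find_spec hex
  set k := Nat.find hex with hk
  have hkmin : ∀ m, m < k → ¬ P m := fun m hm => Nat.find_min hex hm
  have hkpos : 0 < k := by
    rcases Nat.eq_zero_or_pos k with h0 | h
    · exfalso
      apply hUne
      rw [h0] at hUrank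
      exact Submodule.finrank_eq_zero.mp hUrank
    · exact h
  -- the restricted representation on U, transported to Fin k → ℂ
  have e : (↥U) ≃ₗ[ℂ] (Fin k → ℂ) :=
    LinearEquiv.ofFinrankEq _ _ (by rw [hUrank, Module.finrank_fin_fun])
  set res : (V × A) → (↥U →ₗ[ℂ] ↥U) := fun h => (Φ h).restrict (hUinv h) with hres
  set π : V × A → ((Fin k → ℂ) →ₗ[ℂ] (Fin k → ℂ)) :=
    fun h => e.toLinearMap ∘ₗ (res h) ∘ₗ e.symm.toLinearMap with hπ
  have hπapp : ∀ h w, π h w = e (res h (e.symm w)) := fun h w => rfl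
  have hresapp : ∀ h (x : ↥U), ((res h x : V → ℂ)) = Φ h (x : V → ℂ) := fun h x => rfl
  refine ⟨k, π, hkpos, ?_, ?_, ?_, ?_⟩
  · -- identity
    apply LinearMap.ext; intro w
    rw [hπapp]
    have : res (0,0) (e.symm w) = e.symm w := by
      apply Subtype.ext
      rw [hresapp, hΦ, mdl_id hβ₂ hψmul]; rfl
    rw [this]; simp
  · -- multiplicativity
    intro v₁ z₁ v₂ z₂
    apply LinearMap.ext; intro w
    simp only [LinearMap.coe_comp, Function.comp_apply]
    rw [hπapp, hπapp, hπapp]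
    rw [LinearEquiv.symm_apply_apply]
    congr 1
    apply Subtype.ext
    rw [hresapp, hresapp, hresapp, hΦ, mdl_mul hβ₁ hβ₂ hψmul]
    rfl
  · -- irreducibility
    intro U' hU'inv
    by_cases hbot : U' = ⊥
    · exact Or.inl hbot
    right
    -- push U' down to a submodule of V → ℂ
    set S₀ : Submodule ℂ ↥U := U'.comap (e : ↥U →ₗ[ℂ] (Fin k → ℂ)) with hS₀
    set S : Submodule ℂ (V → ℂ) := S₀.map U.subtype with hS
    have hSle : S ≤ U := by
      rintro x ⟨y, _, rfl⟩; exact y.2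
    have hSinv : ∀ (h : V × A), ∀ w ∈ S, Φ h w ∈ S := by
      rintro h w ⟨y, hy, rfl⟩
      refine ⟨res h y, Submodule.mem_comap.mpr ?_, (hresapp h y).symm⟩
      have hy' : π h (e y) ∈ U' :=
        hU'inv h (e y) (by simpa [hS₀, Submodule.mem_comap] using hy)
      have heq : π h (e y) = e (res h y) := by
        rw [hπapp, LinearEquiv.symm_apply_apply]
      simpa [← heq] using hy'
    have hSne : S ≠ ⊥ := by
      obtain ⟨y, hyU', hy0⟩ := Submodule.exists_mem_ne_zero_of_ne_bot hbot
      intro hcontr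
      have hmem : ((e.symm y : ↥U) : V → ℂ) ∈ S := by
        refine ⟨e.symm y, ?_, rfl⟩
        simp [hS₀, Submodule.mem_comap, hyU']
      rw [hcontr, Submodule.mem_bot] at hmem
      apply hy0
      have : (e.symm y : ↥U) = 0 := Subtype.ext hmem
      have := congrArg e this
      simpa using this
    have hPk : P (Module.finrank ℂ S) := ⟨S, hSinv, hSne, rfl⟩
    have h1 : k ≤ Module.finrank ℂ S := Nat.find_le hPk
    have h2 : Module.finrank ℂ S ≤ k := hUrank ▸ Submodule.finrank_mono hSle
    -- finrank U' = finrank S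
    have h3 : Module.finrank ℂ S₀ = Module.finrank ℂ S := by
      rw [hS]
      exact (Submodule.finrank_map_subtype_eq U S₀).symm
    have h4 : Module.finrank ℂ U' = Module.finrank ℂ S₀ := by
      have : S₀ = U'.map (e.symm : (Fin k → ℂ) →ₗ[ℂ] ↥U) := by
        apply le_antisymm
        · intro x hx
          exact ⟨e x, hx, by simp⟩
        · rintro x ⟨y, hy, rfl⟩
          simpa [hS₀, Submodule.mem_comap] using hy
      rw [this]
      exact (LinearEquiv.finrank_map_eq e.symm U').symm
    have h5 : Module.finrank ℂ U' = k := by omega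
    apply Submodule.eq_top_of_finrank_eq
    rw [h5, Module.finrank_fin_fun]
  · -- central character
    intro z
    apply LinearMap.ext; intro w
    rw [hπapp]
    have : res (0,z) (e.symm w) = (ψ z : ℂ) • (e.symm w) := by
      apply Subtype.ext
      rw [hresapp, hΦ, mdl_cc hβ₂ hψmul]
      rfl
    rw [this]
    simp

end exist

section uniq
variable {V A : Type} [AddCommGroup V] [Fintype V] [AddCommGroup A]
variable {β : V → V → A} {ψ : A → ℂˣ}
variable {W₁ W₂ : Type} [AddCommGroup W₁] [Module ℂ W₁] [FiniteDimensional ℂ W₁]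
  [AddCommGroup W₂] [Module ℂ W₂] [FiniteDimensional ℂ W₂]

lemma uniqueness
    (hβ₁ : ∀ u u' v : V, β (u + u') v = β u v + β u' v)
    (hβ₂ : ∀ u v v' : V, β u (v + v') = β u v + β u v')
    (hψmul : ∀ a b : A, ψ (a + b) = ψ a * ψ b)
    (hnd : ∀ v : V, v ≠ 0 → ∃ u : V, ψ (β v u - β u v) ≠ 1)
    (π₁ : V × A → (W₁ →ₗ[ℂ] W₁)) (π₂ : V × A → (W₂ →ₗ[ℂ] W₂))
    (hw₁ : ∃ w : W₁, w ≠ 0) (hw₂ : ∃ w : W₂, w ≠ 0)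
    (hid₁ : π₁ (0, 0) = LinearMap.id) (hid₂ : π₂ (0, 0) = LinearMap.id)
    (hmul₁ : ∀ (v₁ : V) (z₁ : A) (v₂ : V) (z₂ : A),
        π₁ (v₁ + v₂, z₁ + z₂ + β v₁ v₂) = π₁ (v₁, z₁) ∘ₗ π₁ (v₂, z₂))
    (hmul₂ : ∀ (v₁ : V) (z₁ : A) (v₂ : V) (z₂ : A),
        π₂ (v₁ + v₂, z₁ + z₂ + β v₁ v₂) = π₂ (v₁, z₁) ∘ₗ π₂ (v₂, z₂))
    (hirr₁ : ∀ U : Submodule ℂ W₁, (∀ (h : V × A), ∀ w ∈ U, π₁ h w ∈ U) → U = ⊥ ∨ U = ⊤)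
    (hirr₂ : ∀ U : Submodule ℂ W₂, (∀ (h : V × A), ∀ w ∈ U, π₂ h w ∈ U) → U = ⊥ ∨ U = ⊤)
    (hcc₁ : ∀ z : A, π₁ (0, z) = ((ψ z : ℂ)) • LinearMap.id)
    (hcc₂ : ∀ z : A, π₂ (0, z) = ((ψ z : ℂ)) • LinearMap.id) :
    ∃ T : W₁ ≃ₗ[ℂ] W₂, ∀ (h : V × A) (w : W₁), T (π₁ h w) = π₂ h (T w) := by
  classical
  obtain ⟨w₁0, hw₁0⟩ := hw₁
  obtain ⟨w₂0, hw₂0⟩ := hw₂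
  haveI : Nontrivial W₁ := nontrivial_of_ne w₁0 0 hw₁0
  haveI : Nontrivial W₂ := nontrivial_of_ne w₂0 0 hw₂0
  set σ : V → (W₁ →ₗ[ℂ] W₁) := fun v => π₁ (-v, -β v (-v)) with hσ
  set T : (W₁ →ₗ[ℂ] W₂) → (W₁ →ₗ[ℂ] W₂) :=
    fun S => ∑ v : V, π₂ (v, 0) ∘ₗ S ∘ₗ σ v with hT
  -- intertwining property
  have hinter : ∀ (S : W₁ →ₗ[ℂ] W₂) (g : V × A) (w : W₁),
      π₂ g (T S w) = T S (π₁ g w) := by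
    intro S g w
    obtain ⟨u, z⟩ := g
    have key : π₂ (u, 0) (T S w) = T S (π₁ (u, 0) w) := by
      have lhs : π₂ (u, 0) (T S w)
          = ∑ v : V, (ψ (β u v) : ℂ) • π₂ (u + v, 0) (S (σ v w)) := by
        rw [hT]
        simp only [LinearMap.sum_apply, LinearMap.comp_apply, map_sum]
        refine Finset.sum_congr rfl fun v _ => ?_
        have h1 : π₂ (u, 0) ∘ₗ π₂ (v, 0) = π₂ (u + v, β u v) := by
          have := hmul₂ u 0 v 0; rw [zero_add, zero_add] at this; exact this.symm
        have h2 : π₂ (u + v, β u v) = (ψ (β u v) : ℂ) • π₂ (u + v, 0) :=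
          pi_smul hβ₁ hmul₂ hcc₂ (u + v) (β u v)
        have := LinearMap.congr_fun (h1.trans h2) (S (σ v w))
        simpa using this
      have rhs : T S (π₁ (u, 0) w)
          = ∑ v : V, (ψ (β u v) : ℂ) • π₂ (u + v, 0) (S (σ v w)) := by
        rw [hT]
        simp only [LinearMap.sum_apply, LinearMap.comp_apply]
        refine (Fintype.sum_equiv (Equiv.addLeft u) _ _ fun v => ?_).symm
        simp only [Equiv.coe_addLeft]
        have h3 := LinearMap.congr_fun
          (sigma_comp hβ₁ hβ₂ hψmul hid₁ hmul₁ hcc₁ u v) w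
        simp only [LinearMap.comp_apply, LinearMap.smul_apply] at h3
        show (ψ (β u v) : ℂ) • (π₂ (u + v, 0)) (S ((π₁ (-v, -β v (-v))) w))
          = (π₂ (u + v, 0)) (S ((π₁ (-(u+v), -β (u+v) (-(u+v)))) ((π₁ (u, 0)) w)))
        rw [h3, map_smul, map_smul]
      rw [lhs, rhs]
    have e₁ := LinearMap.congr_fun (pi_smul hβ₁ hmul₂ hcc₂ u z) (T S w)
    have e₂ := LinearMap.congr_fun (pi_smul hβ₁ hmul₁ hcc₁ u z) w
    simp only [LinearMap.smul_apply] at e₁ e₂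
    rw [e₁, e₂, map_smul, key]
  -- nonvanishing of T on some S
  have hTne : ∃ S : W₁ →ₗ[ℂ] W₂, T S ≠ 0 := by
    by_contra hall
    push_neg at hall
    -- cleaned
    set d₁ := Module.finrank ℂ W₁ with hd₁
    set d₂ := Module.finrank ℂ W₂ with hd₂
    set b₁ := Module.finBasis ℂ W₁ with hb₁
    set b₂ := Module.finBasis ℂ W₂ with hb₂
    set M : V → Matrix (Fin d₂) (Fin d₂) ℂ :=
      fun v => LinearMap.toMatrix b₂ b₂ (π₂ (v, 0)) with hM
    set N : V → Matrix (Fin d₁) (Fin d₁) ℂ :=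
      fun v => LinearMap.toMatrix b₁ b₁ (σ v) with hN
    have hmat : ∀ X : Matrix (Fin d₂) (Fin d₁) ℂ,
        ∑ v : V, M v * X * N v = 0 := by
      intro X
      have h0 := hall ((LinearMap.toMatrix b₁ b₂).symm X)
      have := congrArg (LinearMap.toMatrix b₁ b₂) h0
      rw [hT] at this
      rw [map_sum, map_zero] at this
      rw [← this]
      refine Finset.sum_congr rfl fun v _ => ?_
      rw [LinearMap.toMatrix_comp b₁ b₂ b₂, LinearMap.toMatrix_comp b₁ b₁ b₂,
        LinearEquiv.apply_symm_apply, Matrix.mul_assoc]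
    have hentry : ∀ (i : Fin d₂) (j : Fin d₁),
        ∑ v : V, (M v) i i * (N v) j j = 0 := by
      intro i j
      have := congrFun (congrFun (hmat (Matrix.single i j 1)) i) j
      simp only [Matrix.zero_apply, Matrix.sum_apply] at this
      rw [← this]
      refine Finset.sum_congr rfl fun v _ => ?_
      rw [Matrix.mul_assoc]
      simp [Matrix.mul_apply, Matrix.single, ite_and, Finset.mul_sum]
    have hzero : ∑ v : V,
        (LinearMap.trace ℂ W₂ (π₂ (v, 0))) * (LinearMap.trace ℂ W₁ (σ v)) = 0 := by
      have : ∀ v : V, (LinearMap.trace ℂ W₂ (π₂ (v, 0))) * (LinearMap.trace ℂ W₁ (σ v))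
          = ∑ i : Fin d₂, ∑ j : Fin d₁, (M v) i i * (N v) j j := by
        intro v
        rw [LinearMap.trace_eq_matrix_trace ℂ b₂, LinearMap.trace_eq_matrix_trace ℂ b₁]
        rw [Matrix.trace, Matrix.trace, Finset.sum_mul_sum]
        rfl
      rw [Finset.sum_congr rfl fun v _ => this v]
      rw [Finset.sum_comm]
      rw [Finset.sum_congr rfl fun i _ => Finset.sum_comm]
      simp only [hentry]
      simp
    have hzero' : ∑ v : V,
        (LinearMap.trace ℂ W₂ (π₂ (v, 0))) * (LinearMap.trace ℂ W₁ (σ v))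
          = (d₂ : ℂ) * (d₁ : ℂ) := by
      rw [Finset.sum_eq_single_of_mem 0 (Finset.mem_univ 0)]
      · have hσ0 : σ 0 = LinearMap.id := by
          rw [hσ]; simp only [neg_zero]
          rw [beta_zl hβ₁, neg_zero, hid₁]
        rw [hσ0, hid₂, LinearMap.trace_id, LinearMap.trace_id]
      · intro v _ hv
        rw [trace_vanish hβ₁ hβ₂ hψmul hid₂ hmul₂ hcc₂ hnd hv, zero_mul]
    rw [hzero] at hzero'
    have h₁ : (d₁:ℂ) ≠ 0 := Nat.cast_ne_zero.mpr (Module.finrank_pos (R := ℂ) (M := W₁)).ne'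
    have h₂ : (d₂:ℂ) ≠ 0 := Nat.cast_ne_zero.mpr (Module.finrank_pos (R := ℂ) (M := W₂)).ne'
    exact (mul_ne_zero h₂ h₁) hzero'.symm
  -- Schur
  obtain ⟨S, hS⟩ := hTne
  set K := T S with hK
  have hint : ∀ (g : V × A) (w : W₁), π₂ g (K w) = K (π₁ g w) := fun g w => hinter S g w
  have hker : LinearMap.ker K = ⊥ := by
    have hinv : ∀ (h : V × A), ∀ w ∈ LinearMap.ker K, π₁ h w ∈ LinearMap.ker K := by
      intro h w hw
      rw [LinearMap.mem_ker] at hw ⊢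
      rw [← hint, hw, map_zero]
    rcases hirr₁ (LinearMap.ker K) hinv with h | h
    · exact h
    · exact absurd (LinearMap.ker_eq_top.mp h) hS
  have hrange : LinearMap.range K = ⊤ := by
    have hinv : ∀ (h : V × A), ∀ w ∈ LinearMap.range K, π₂ h w ∈ LinearMap.range K := by
      rintro h w ⟨x, rfl⟩
      exact ⟨π₁ h x, (hint h x).symm⟩
    rcases hirr₂ (LinearMap.range K) hinv with h | h
    · exact absurd (LinearMap.range_eq_bot.mp h) hS
    · exact h
  refine ⟨LinearEquiv.ofBijective K
    ⟨LinearMap.ker_eq_bot.mp hker, LinearMap.range_eq_top.mp hrange⟩, fun h w => ?_⟩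
  exact (hint h w).symm

end uniq

/-- Stone–von Neumann property.  For finite abelian groups `V`, `A`, a
biadditive `β : V → V → A`, an injective character `ψ : A → ℂˣ` such that the pairing
`ψ(ω(·,·))` is nondegenerate, the Heisenberg group `H(V) = V × A` (with multiplication
`(v₁,z₁)·(v₂,z₂) = (v₁+v₂, z₁+z₂+β v₁ v₂)`) admits a finite-dimensional irreducible complex
representation with central character `ψ`, and any two such representations are isomorphic. -/
theorem stmt_2 (V A : Type) [AddCommGroup V] [Fintype V] [AddCommGroup A] [Fintype A]
    (β : V → V → A)
    (hβ₁ : ∀ u u' v : V, β (u + u') v = β u v + β u' v)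
    (hβ₂ : ∀ u v v' : V, β u (v + v') = β u v + β u v')
    (ψ : A → ℂˣ) (hψmul : ∀ a b : A, ψ (a + b) = ψ a * ψ b)
    (hψinj : Function.Injective ψ)
    (hnd : ∀ v : V, v ≠ 0 → ∃ u : V, ψ (β v u - β u v) ≠ 1)
    (W₁ W₂ : Type) [AddCommGroup W₁] [Module ℂ W₁] [FiniteDimensional ℂ W₁]
    [AddCommGroup W₂] [Module ℂ W₂] [FiniteDimensional ℂ W₂] :
    -- existence
    (∃ (k : ℕ) (π : V × A → ((Fin k → ℂ) →ₗ[ℂ] (Fin k → ℂ))),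
      0 < k ∧
      π (0, 0) = LinearMap.id ∧
      (∀ (v₁ : V) (z₁ : A) (v₂ : V) (z₂ : A),
        π (v₁ + v₂, z₁ + z₂ + β v₁ v₂) = π (v₁, z₁) ∘ₗ π (v₂, z₂)) ∧
      (∀ U : Submodule ℂ (Fin k → ℂ),
        (∀ (h : V × A), ∀ w ∈ U, π h w ∈ U) → U = ⊥ ∨ U = ⊤) ∧
      (∀ z : A, π (0, z) = ((ψ z : ℂ)) • LinearMap.id)) ∧
    -- uniqueness
    (∀ (π₁ : V × A → (W₁ →ₗ[ℂ] W₁)) (π₂ : V × A → (W₂ →ₗ[ℂ] W₂)),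
      (∃ w : W₁, w ≠ 0) → (∃ w : W₂, w ≠ 0) →
      π₁ (0, 0) = LinearMap.id → π₂ (0, 0) = LinearMap.id →
      (∀ (v₁ : V) (z₁ : A) (v₂ : V) (z₂ : A),
        π₁ (v₁ + v₂, z₁ + z₂ + β v₁ v₂) = π₁ (v₁, z₁) ∘ₗ π₁ (v₂, z₂)) →
      (∀ (v₁ : V) (z₁ : A) (v₂ : V) (z₂ : A),
        π₂ (v₁ + v₂, z₁ + z₂ + β v₁ v₂) = π₂ (v₁, z₁) ∘ₗ π₂ (v₂, z₂)) →
      (∀ U : Submodule ℂ W₁, (∀ (h : V × A), ∀ w ∈ U, π₁ h w ∈ U) → U = ⊥ ∨ U = ⊤) →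
      (∀ U : Submodule ℂ W₂, (∀ (h : V × A), ∀ w ∈ U, π₂ h w ∈ U) → U = ⊥ ∨ U = ⊤) →
      (∀ z : A, π₁ (0, z) = ((ψ z : ℂ)) • LinearMap.id) →
      (∀ z : A, π₂ (0, z) = ((ψ z : ℂ)) • LinearMap.id) →
      ∃ T : W₁ ≃ₗ[ℂ] W₂, ∀ (h : V × A) (w : W₁), T (π₁ h w) = π₂ h (T w)) := by
  constructor
  · exact existence hβ₁ hβ₂ hψmul
  · intro π₁ π₂ hw₁ hw₂ hid₁ hid₂ hmul₁ hmul₂ hirr₁ hirr₂ hcc₁ hcc₂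
    exact uniqueness hβ₁ hβ₂ hψmul hnd π₁ π₂ hw₁ hw₂ hid₁ hid₂ hmul₁ hmul₂ hirr₁ hirr₂ hcc₁ hcc₂
end

section
/- Let S be a type, 𝓗 : S → Type a family of complex vector spaces, U : S → S → Prop a symmetric relation, and for every pair (M, L) with U M L let T_{M,L} : 𝓗 L ≃ₗ[ℂ] 𝓗 M be a linear isomorphism. Assume: (i) whenever U N M, U M L and U N L all hold, T_{N,M} ∘ T_{M,L} = T_{N,L}; (ii) for every finite subset F of S there exists M ∈ S with U M L for every L ∈ F. Then there exists a unique family of linear maps T'_{M,L} : 𝓗 L →ₗ[ℂ] 𝓗 M, indexed by all pairs (M, L) ∈ S × S, such that T'_{M,L} = T_{M,L} whenever U M L, and T'_{N,M} ∘ T'_{M,L} = T'_{N,L} for all N, M, L ∈ S. -/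
/-- A partial multiplicative system of intertwining isomorphisms
`T_{M,L} : 𝓗 L ≃ₗ[ℂ] 𝓗 M`, defined for pairs in a symmetric relation `U` satisfying the
multiplicativity condition on `U`-triples and a cofinality condition, extends uniquely to a
multiplicative system of linear maps defined for all pairs. -/
theorem stmt_7 (S : Type*) (H : S → Type*)
    [∀ s, AddCommGroup (H s)] [∀ s, Module ℂ (H s)]
    (U : S → S → Prop) (hUsymm : ∀ a b : S, U a b → U b a)
    (T : ∀ M L : S, U M L → (H L ≃ₗ[ℂ] H M))
    (hT : ∀ (n m l : S) (h₁ : U n m) (h₂ : U m l) (h₃ : U n l),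
      ∀ x : H l, T n m h₁ (T m l h₂ x) = T n l h₃ x)
    (hcofinal : ∀ F : Finset S, ∃ m : S, ∀ l ∈ F, U m l) :
    ∃! T' : ∀ M L : S, H L →ₗ[ℂ] H M,
      (∀ (m l : S) (h : U m l), T' m l = (T m l h : H l →ₗ[ℂ] H m)) ∧
      (∀ (n m l : S) (x : H l), T' n m (T' m l x) = T' n l x) := by
  classical
  choose u hu using fun (p : S × S) => hcofinal {p.1, p.2}
  have hu1 : ∀ p : S × S, U (u p) p.1 := fun p => hu p p.1 (by simp)
  have hu2 : ∀ p : S × S, U (u p) p.2 := fun p => hu p p.2 (by simp)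
  set T' : ∀ M L : S, H L →ₗ[ℂ] H M := fun M L =>
    ((T (u (M, L)) M (hu1 (M, L))).symm.toLinearMap).comp
      (T (u (M, L)) L (hu2 (M, L))).toLinearMap with hT'def
  have key : ∀ (M L n : S) (h1 : U n M) (h2 : U n L) (x : H L),
      T' M L x = (T n M h1).symm (T n L h2 x) := by
    intro M L n h1 h2 x
    obtain ⟨p, hp⟩ := hcofinal {M, L, n, u (M, L)}
    have hpM : U p M := hp M (by simp)
    have hpL : U p L := hp L (by simp)
    have hpn : U p n := hp n (by simp)
    have hpu : U p (u (M, L)) := hp _ (by simp)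
    have gen : ∀ (m : S) (hm1 : U m M) (hm2 : U m L) (hpm : U p m),
        (T m M hm1).symm (T m L hm2 x) = (T p M hpM).symm (T p L hpL x) := by
      intro m hm1 hm2 hpm
      apply (T p M hpM).injective
      rw [LinearEquiv.apply_symm_apply,
        ← hT p m M hpm hm1 hpM, LinearEquiv.apply_symm_apply, hT p m L hpm hm2 hpL]
    have e1 := gen (u (M, L)) (hu1 (M, L)) (hu2 (M, L)) hpu
    have e2 := gen n h1 h2 hpn
    simp only [hT'def, LinearMap.comp_apply, LinearEquiv.coe_coe]
    rw [e1, ← e2]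
  have hres : ∀ (m l : S) (h : U m l), T' m l = (T m l h : H l →ₗ[ℂ] H m) := by
    intro m l h
    ext x
    have hn1 := hu1 (m, l)
    have hn2 := hu2 (m, l)
    rw [LinearEquiv.coe_coe, key m l (u (m, l)) hn1 hn2 x]
    apply (T (u (m, l)) m hn1).injective
    rw [LinearEquiv.apply_symm_apply, hT _ m l hn1 h hn2]
  have hmul : ∀ (n m l : S) (x : H l), T' n m (T' m l x) = T' n l x := by
    intro n m l x
    obtain ⟨p, hp⟩ := hcofinal {n, m, l}
    have hpn : U p n := hp n (by simp)
    have hpm : U p m := hp m (by simp)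
    have hpl : U p l := hp l (by simp)
    rw [key m l p hpm hpl, key n m p hpn hpm, key n l p hpn hpl,
      LinearEquiv.apply_symm_apply]
  refine ⟨T', ⟨hres, hmul⟩, ?_⟩
  rintro T'' ⟨hres'', hmul''⟩
  funext M L
  ext x
  have hpM := hu1 (M, L)
  have hpL := hu2 (M, L)
  have hMp : U M (u (M, L)) := hUsymm _ _ hpM
  calc T'' M L x = T'' M (u (M, L)) (T'' (u (M, L)) L x) := (hmul'' M _ L x).symm
    _ = T M (u (M, L)) hMp (T (u (M, L)) L hpL x) := by
        rw [hres'' M _ hMp, hres'' _ L hpL]; rfl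
    _ = T' M (u (M, L)) (T' (u (M, L)) L x) := by
        rw [hres M _ hMp, hres _ L hpL]; rfl
    _ = T' M L x := hmul M _ L x
end

section
/- Let n : ℕ and let A be a symmetric n×n matrix over ℤ/4ℤ with IsUnit A.det. Then there exist natural numbers n₁, n₂, n₃, n₄ with n = n₁ + n₂ + 2·n₃ + 2·n₄ such that A is congruent to the block-diagonal matrix consisting of n₁ diagonal entries equal to 1, n₂ diagonal entries equal to 3 (= −1), n₃ blocks equal to H, and n₄ blocks equal to M₂. -/
open Matrix

set_option linter.unusedSectionVars false
set_option maxHeartbeats 2000000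
set_option maxRecDepth 100000

/-- The hyperbolic plane `H = ![![0,1],![1,0]]` over `ℤ/4ℤ`. -/
def Hm : Matrix (Fin 2) (Fin 2) (ZMod 4) := !![0, 1; 1, 0]

/-- The block `M₂ = ![![2,1],![1,2]]` over `ℤ/4ℤ`. -/
def M2 : Matrix (Fin 2) (Fin 2) (ZMod 4) := !![2, 1; 1, 2]

/-- The block-diagonal standard form with `n₁` entries `1`, `n₂` entries `3 = -1`,
`n₃` blocks `H` and `n₄` blocks `M₂`. -/
def standardForm (n₁ n₂ n₃ n₄ : ℕ) :
    Matrix ((Fin n₁ ⊕ Fin n₂) ⊕ ((Fin 2 × Fin n₃) ⊕ (Fin 2 × Fin n₄)))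
           ((Fin n₁ ⊕ Fin n₂) ⊕ ((Fin 2 × Fin n₃) ⊕ (Fin 2 × Fin n₄))) (ZMod 4) :=
  Matrix.fromBlocks
    (Matrix.fromBlocks 1 0 0 ((3 : ZMod 4) • (1 : Matrix (Fin n₂) (Fin n₂) (ZMod 4))))
    0 0
    (Matrix.fromBlocks (Matrix.blockDiagonal fun _ : Fin n₃ => Hm) 0 0
      (Matrix.blockDiagonal fun _ : Fin n₄ => M2))

namespace Stmt8Aux

abbrev T (n₁ n₂ n₃ n₄ : ℕ) := (Fin n₁ ⊕ Fin n₂) ⊕ ((Fin 2 × Fin n₃) ⊕ (Fin 2 × Fin n₄))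

variable {R : Type*} [CommRing R] {m l k : Type*} [Fintype m] [DecidableEq m]
  [Fintype l] [DecidableEq l] [Fintype k] [DecidableEq k]

/-- Congruence of matrices up to reindexing. -/
def Cong (A : Matrix m m R) (B : Matrix l l R) : Prop :=
  ∃ (e : m ≃ l) (P : Matrix m m R), IsUnit P.det ∧ Pᵀ * A * P = B.submatrix e e

theorem cong_trans {A : Matrix m m R} {B : Matrix l l R} {C : Matrix k k R}
    (h1 : Cong A B) (h2 : Cong B C) : Cong A C := by
  obtain ⟨e, P, hP, hPe⟩ := h1
  obtain ⟨f, Q, hQ, hQf⟩ := h2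
  refine ⟨e.trans f, P * (Q.submatrix e e), ?_, ?_⟩
  · rw [det_mul, det_submatrix_equiv_self]; exact hP.mul hQ
  · rw [transpose_mul, transpose_submatrix]
    calc (Qᵀ.submatrix e e) * Pᵀ * A * (P * Q.submatrix e e)
        = (Qᵀ.submatrix e e) * (Pᵀ * A * P) * Q.submatrix e e := by
          simp only [Matrix.mul_assoc]
      _ = (Qᵀ.submatrix e e) * (B.submatrix e e) * Q.submatrix e e := by rw [hPe]
      _ = (Qᵀ * B * Q).submatrix e e := by
          rw [submatrix_mul_equiv, submatrix_mul_equiv]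
      _ = (C.submatrix f f).submatrix e e := by rw [hQf]
      _ = C.submatrix (e.trans f) (e.trans f) := by
          rw [submatrix_submatrix]; rfl

theorem cong_submatrix_self (A : Matrix m m R) (e : l ≃ m) :
    Cong (A.submatrix e e) A := ⟨e, 1, by simp⟩

theorem cong_of_submatrix {A : Matrix m m R} {B : Matrix k k R} (e : l ≃ m)
    (h : Cong (A.submatrix e e) B) : Cong A B := by
  have hA : A = (A.submatrix e e).submatrix e.symm e.symm := by
    simp [submatrix_submatrix]
  rw [hA]
  exact cong_trans (cong_submatrix_self _ _) h

theorem fromBlocks_submatrix_map {α β α' β' : Type*}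
    (A : Matrix α α R) (B : Matrix α β R) (C : Matrix β α R) (D : Matrix β β R)
    (f : α' → α) (g : β' → β) :
    (fromBlocks A B C D).submatrix (Sum.map f g) (Sum.map f g) =
      fromBlocks (A.submatrix f f) (B.submatrix f g) (C.submatrix g f) (D.submatrix g g) := by
  ext (x | x) (y | y) <;> rfl

theorem cong_fromBlocks {α β α' β' : Type*} [Fintype α] [DecidableEq α]
    [Fintype β] [DecidableEq β] [Fintype α'] [DecidableEq α'] [Fintype β'] [DecidableEq β']
    {A : Matrix α α R} {A' : Matrix α' α' R} {B : Matrix β β R} {B' : Matrix β' β' R}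
    (hA : Cong A A') (hB : Cong B B') :
    Cong (fromBlocks A 0 0 B) (fromBlocks A' 0 0 B') := by
  obtain ⟨e, P, hP, hPe⟩ := hA
  obtain ⟨f, Q, hQ, hQf⟩ := hB
  refine ⟨e.sumCongr f, fromBlocks P 0 0 Q, ?_, ?_⟩
  · rw [det_fromBlocks_zero₁₂]; exact hP.mul hQ
  · rw [fromBlocks_transpose, fromBlocks_multiply, fromBlocks_multiply]
    have he : ⇑(e.sumCongr f) = Sum.map ⇑e ⇑f := by ext (x | x) <;> rfl
    rw [he, fromBlocks_submatrix_map]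
    simp [hPe, hQf]

theorem pivot_step {α β : Type*} [Fintype α] [DecidableEq α] [Fintype β] [DecidableEq β]
    (a : Matrix α α R) (b : Matrix α β R) (d : Matrix β β R)
    (ha : aᵀ = a) (hadet : IsUnit a.det) :
    (fromBlocks (1 : Matrix α α R) (-(a⁻¹ * b)) 0 1)ᵀ *
      (fromBlocks a b bᵀ d) * (fromBlocks 1 (-(a⁻¹ * b)) 0 1) =
      fromBlocks a 0 0 (d - bᵀ * a⁻¹ * b) := by
  have hainv : a * a⁻¹ = 1 := mul_nonsing_inv a hadet
  have hainv' : a⁻¹ * a = 1 := nonsing_inv_mul a hadet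
  have hainvT : (a⁻¹)ᵀ = a⁻¹ := by rw [transpose_nonsing_inv, ha]
  have h1 : -(a * (a⁻¹ * b)) + b = 0 := by
    rw [← Matrix.mul_assoc, hainv, Matrix.one_mul, neg_add_cancel]
  have h2 : -(bᵀ * a⁻¹ᵀ * a) + bᵀ = 0 := by
    rw [hainvT, Matrix.mul_assoc, hainv', Matrix.mul_one, neg_add_cancel]
  rw [fromBlocks_transpose, fromBlocks_multiply, fromBlocks_multiply]
  rw [fromBlocks_inj]
  refine ⟨by simp, ?_, ?_, ?_⟩
  · simp [h1]
  · simp [transpose_neg, transpose_mul, h2]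
  · simp only [transpose_neg, transpose_mul, transpose_one, transpose_zero,
      Matrix.neg_mul, Matrix.one_mul, Matrix.mul_one, Matrix.zero_mul, Matrix.mul_zero,
      add_zero, zero_add]
    rw [h2]
    simp [hainvT, Matrix.mul_assoc, sub_eq_add_neg, add_comm]

/-- Splitting off an invertible block. -/
theorem split_step {α β : Type*} [Fintype α] [DecidableEq α] [Fintype β] [DecidableEq β]
    (A : Matrix m m R) (e : α ⊕ β ≃ m) (hs : A.IsSymm) (hdet : IsUnit A.det)
    (h11 : IsUnit ((A.submatrix e e).toBlocks₁₁).det) :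
    ∃ S : Matrix β β R, S.IsSymm ∧ IsUnit S.det ∧
      Cong A (fromBlocks ((A.submatrix e e).toBlocks₁₁) 0 0 S) := by
  set B : Matrix (α ⊕ β) (α ⊕ β) R := A.submatrix e e with hB
  have hBsymm : Bᵀ = B := by
    rw [hB, transpose_submatrix, hs.eq]
  have hBsym : ∀ u v, B v u = B u v := fun u v => congrFun (congrFun hBsymm u) v
  set a := B.toBlocks₁₁ with hadef
  set b := B.toBlocks₁₂ with hbdef
  set d := B.toBlocks₂₂ with hddef
  have haT : aᵀ = a := by
    ext x y; exact hBsym (Sum.inl x) (Sum.inl y)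
  have hdT : dᵀ = d := by
    ext x y; exact hBsym (Sum.inr x) (Sum.inr y)
  have hc : B.toBlocks₂₁ = bᵀ := by
    ext x y; exact hBsym (Sum.inl y) (Sum.inr x)
  have hBblocks : B = fromBlocks a b bᵀ d := by
    rw [← hc]; exact (fromBlocks_toBlocks B).symm
  have haInvT : (a⁻¹)ᵀ = a⁻¹ := by rw [transpose_nonsing_inv, haT]
  refine ⟨d - bᵀ * a⁻¹ * b, ?_, ?_, ?_⟩
  · -- symmetric
    rw [Matrix.IsSymm]
    rw [transpose_sub, hdT]
    congr 1
    rw [transpose_mul, transpose_mul, haInvT, transpose_transpose, Matrix.mul_assoc]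
  · -- det
    have hPdet : IsUnit (fromBlocks (1 : Matrix α α R) (-(a⁻¹ * b)) 0 1).det := by
      rw [det_fromBlocks_zero₂₁, det_one, det_one, one_mul]; exact isUnit_one
    have hBdet : IsUnit B.det := by
      rw [hB, det_submatrix_equiv_self]; exact hdet
    have heq := pivot_step (R := R) a b d haT h11
    rw [← hBblocks] at heq
    have : IsUnit (fromBlocks a 0 0 (d - bᵀ * a⁻¹ * b)).det := by
      rw [← heq, det_mul, det_mul, det_transpose]
      exact (hPdet.mul hBdet).mul hPdet
    rw [det_fromBlocks_zero₁₂] at this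
    exact (isUnit_of_mul_isUnit_right this)
  · -- congruence
    apply cong_of_submatrix e
    rw [← hB]
    refine ⟨Equiv.refl _, fromBlocks 1 (-(a⁻¹ * b)) 0 1, ?_, ?_⟩
    · rw [det_fromBlocks_zero₂₁, det_one, det_one, one_mul]; exact isUnit_one
    · have heq := pivot_step (R := R) a b d haT h11
      rw [← hBblocks] at heq
      rw [heq]
      rfl

section Equivs

def e₁ (n₁ n₂ n₃ n₄ : ℕ) : (Fin 1 ⊕ T n₁ n₂ n₃ n₄) ≃ T (n₁+1) n₂ n₃ n₄ where
  toFun x := match x with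
    | .inl _ => .inl (.inl 0)
    | .inr (.inl (.inl a)) => .inl (.inl a.succ)
    | .inr (.inl (.inr b)) => .inl (.inr b)
    | .inr (.inr c) => .inr c
  invFun y := match y with
    | .inl (.inl a) => Fin.cases (.inl 0) (fun a' => .inr (.inl (.inl a'))) a
    | .inl (.inr b) => .inr (.inl (.inr b))
    | .inr c => .inr (.inr c)
  left_inv := by rintro (x | ((a | b) | c)) <;> simp [Fin.eq_zero]
  right_inv := by
    rintro ((a | b) | c)
    · induction a using Fin.cases <;> simp
    · rfl
    · rfl

theorem E1 (n₁ n₂ n₃ n₄ : ℕ) :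
    (standardForm (n₁+1) n₂ n₃ n₄).submatrix (e₁ n₁ n₂ n₃ n₄) (e₁ n₁ n₂ n₃ n₄) =
      Matrix.fromBlocks !![1] 0 0 (standardForm n₁ n₂ n₃ n₄) := by
  ext (x | ((a | b) | c)) (y | ((a' | b') | c')) <;>
    simp [standardForm, e₁, Matrix.submatrix, Matrix.one_apply, Fin.succ_inj,
      Fin.succ_ne_zero, (Fin.succ_ne_zero _).symm, Matrix.fromBlocks,
      Fin.eq_zero]

def e₂ (n₁ n₂ n₃ n₄ : ℕ) : (Fin 1 ⊕ T n₁ n₂ n₃ n₄) ≃ T n₁ (n₂+1) n₃ n₄ where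
  toFun x := match x with
    | .inl _ => .inl (.inr 0)
    | .inr (.inl (.inl a)) => .inl (.inl a)
    | .inr (.inl (.inr b)) => .inl (.inr b.succ)
    | .inr (.inr c) => .inr c
  invFun y := match y with
    | .inl (.inl a) => .inr (.inl (.inl a))
    | .inl (.inr b) => Fin.cases (.inl 0) (fun b' => .inr (.inl (.inr b'))) b
    | .inr c => .inr (.inr c)
  left_inv := by rintro (x | ((a | b) | c)) <;> simp [Fin.eq_zero]
  right_inv := by
    rintro ((a | b) | c)
    · rfl
    · induction b using Fin.cases <;> simp
    · rfl

theorem E2 (n₁ n₂ n₃ n₄ : ℕ) :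
    (standardForm n₁ (n₂+1) n₃ n₄).submatrix (e₂ n₁ n₂ n₃ n₄) (e₂ n₁ n₂ n₃ n₄) =
      Matrix.fromBlocks !![3] 0 0 (standardForm n₁ n₂ n₃ n₄) := by
  ext (x | ((a | b) | c)) (y | ((a' | b') | c')) <;>
    simp [standardForm, e₂, Matrix.submatrix, Matrix.one_apply, Fin.succ_inj,
      Fin.succ_ne_zero, (Fin.succ_ne_zero _).symm, Matrix.fromBlocks,
      Fin.eq_zero]

def e₃ (n₁ n₂ n₃ n₄ : ℕ) : (Fin 2 ⊕ T n₁ n₂ n₃ n₄) ≃ T n₁ n₂ (n₃+1) n₄ where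
  toFun x := match x with
    | .inl a => .inr (.inl (a, 0))
    | .inr (.inl d) => .inl d
    | .inr (.inr (.inl (a, k))) => .inr (.inl (a, k.succ))
    | .inr (.inr (.inr p)) => .inr (.inr p)
  invFun y := match y with
    | .inl d => .inr (.inl d)
    | .inr (.inl (a, k)) => Fin.cases (.inl a) (fun k' => .inr (.inr (.inl (a, k')))) k
    | .inr (.inr p) => .inr (.inr (.inr p))
  left_inv := by rintro (x | (d | (⟨a, k⟩ | p))) <;> simp
  right_inv := by
    rintro (d | (⟨a, k⟩ | p))
    · rfl
    · induction k using Fin.cases <;> simp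
    · rfl

theorem E3 (n₁ n₂ n₃ n₄ : ℕ) :
    (standardForm n₁ n₂ (n₃+1) n₄).submatrix (e₃ n₁ n₂ n₃ n₄) (e₃ n₁ n₂ n₃ n₄) =
      Matrix.fromBlocks Hm 0 0 (standardForm n₁ n₂ n₃ n₄) := by
  ext (x | (d | (⟨a, k⟩ | p))) (y | (d' | (⟨a', k'⟩ | p'))) <;>
    simp [standardForm, e₃, Matrix.submatrix, Matrix.blockDiagonal_apply, Fin.succ_inj,
      Fin.succ_ne_zero, (Fin.succ_ne_zero _).symm, Matrix.fromBlocks]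

def e₄ (n₁ n₂ n₃ n₄ : ℕ) : (Fin 2 ⊕ T n₁ n₂ n₃ n₄) ≃ T n₁ n₂ n₃ (n₄+1) where
  toFun x := match x with
    | .inl a => .inr (.inr (a, 0))
    | .inr (.inl d) => .inl d
    | .inr (.inr (.inl q)) => .inr (.inl q)
    | .inr (.inr (.inr (a, k))) => .inr (.inr (a, k.succ))
  invFun y := match y with
    | .inl d => .inr (.inl d)
    | .inr (.inl q) => .inr (.inr (.inl q))
    | .inr (.inr (a, k)) => Fin.cases (.inl a) (fun k' => .inr (.inr (.inr (a, k')))) k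
  left_inv := by rintro (x | (d | (q | ⟨a, k⟩))) <;> simp
  right_inv := by
    rintro (d | (q | ⟨a, k⟩))
    · rfl
    · rfl
    · induction k using Fin.cases <;> simp

theorem E4 (n₁ n₂ n₃ n₄ : ℕ) :
    (standardForm n₁ n₂ n₃ (n₄+1)).submatrix (e₄ n₁ n₂ n₃ n₄) (e₄ n₁ n₂ n₃ n₄) =
      Matrix.fromBlocks M2 0 0 (standardForm n₁ n₂ n₃ n₄) := by
  ext (x | (d | (q | ⟨a, k⟩))) (y | (d' | (q' | ⟨a', k'⟩))) <;>
    simp [standardForm, e₄, Matrix.submatrix, Matrix.blockDiagonal_apply, Fin.succ_inj,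
      Fin.succ_ne_zero, (Fin.succ_ne_zero _).symm, Matrix.fromBlocks]

end Equivs

section ZMod4

instance : Fintype (Matrix (Fin 2) (Fin 2) (ZMod 4)) :=
  inferInstanceAs (Fintype (Fin 2 → Fin 2 → ZMod 4))

theorem norm2 : ∀ (a b c : ZMod 4), ¬IsUnit a → ¬IsUnit c → IsUnit b →
    (∃ P : Matrix (Fin 2) (Fin 2) (ZMod 4), IsUnit P.det ∧ Pᵀ * !![a,b;b,c] * P = Hm) ∨
    (∃ P : Matrix (Fin 2) (Fin 2) (ZMod 4), IsUnit P.det ∧ Pᵀ * !![a,b;b,c] * P = M2) := by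
  decide

theorem det2_unit : ∀ (a b c : ZMod 4), ¬IsUnit a → ¬IsUnit c → IsUnit b →
    IsUnit (!![a,b;b,c] : Matrix (Fin 2) (Fin 2) (ZMod 4)).det := by
  decide

theorem unit_cases : ∀ u : ZMod 4, IsUnit u → u = 1 ∨ u = 3 := by decide

theorem nonunit_map : ∀ u : ZMod 4, ¬IsUnit u → ZMod.castHom (by norm_num : (2:ℕ) ∣ 4) (ZMod 2) u = 0 := by
  decide

/-- If every entry of a nonempty square matrix over `ZMod 4` is a non-unit, the
determinant is a non-unit. -/
theorem exists_unit_entry (A : Matrix m m (ZMod 4)) [Nonempty m]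
    (hdet : IsUnit A.det) : ∃ i j, IsUnit (A i j) := by
  by_contra h
  push_neg at h
  set f := ZMod.castHom (by norm_num : (2:ℕ) ∣ 4) (ZMod 2) with hf
  have hmap : A.map f = 0 := by
    ext i j
    exact nonunit_map _ (h i j)
  have hdet2 : f A.det = 0 := by
    rw [RingHom.map_det]
    show (A.map f).det = 0
    rw [hmap, Matrix.det_zero]
  have : IsUnit (f A.det) := hdet.map f
  rw [hdet2] at this
  exact (by decide : ¬ IsUnit (0 : ZMod 2)) this

end ZMod4

def pairEquiv (i j : m) (hij : i ≠ j) : Fin 2 ≃ {x : m // x = i ∨ x = j} where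
  toFun a := if a = 0 then ⟨i, Or.inl rfl⟩ else ⟨j, Or.inr rfl⟩
  invFun y := if y.1 = i then 0 else 1
  left_inv a := by
    fin_cases a <;> simp [hij.symm]
  right_inv := by
    rintro ⟨x, (rfl | rfl)⟩ <;> simp [hij, hij.symm]

theorem cong_unique {s : Type*} [Fintype s] [DecidableEq s] [Unique s]
    (M : Matrix s s R) : Cong M !![M default default] := by
  refine ⟨Equiv.ofUnique s (Fin 1), 1, by simp, ?_⟩
  ext x y
  rw [Subsingleton.elim x default, Subsingleton.elim y default]
  simp [Matrix.submatrix_apply, Fin.eq_zero]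

theorem key : ∀ (N : ℕ) (m : Type) [Fintype m] [DecidableEq m] (A : Matrix m m (ZMod 4)),
    A.IsSymm → IsUnit A.det → Fintype.card m = N →
    ∃ n₁ n₂ n₃ n₄ : ℕ, N = n₁ + n₂ + 2*n₃ + 2*n₄ ∧ Cong A (standardForm n₁ n₂ n₃ n₄) := by
  intro N
  induction N using Nat.strong_induction_on with
  | _ N ih =>
    intro m _ _ A hsymm hdet hcard
    have hAsym : ∀ u v, A v u = A u v := fun u v => congrFun (congrFun hsymm u) v
    rcases Nat.eq_zero_or_pos N with hN0 | hNpos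
    · subst hN0
      haveI : IsEmpty m := Fintype.card_eq_zero_iff.mp hcard
      refine ⟨0, 0, 0, 0, by simp, Equiv.equivOfIsEmpty m _, 1, by simp, ?_⟩
      ext x y
      exact (IsEmpty.false x).elim
    haveI : Nonempty m := Fintype.card_pos_iff.mp (hcard ▸ hNpos)
    by_cases hdiag : ∃ i, IsUnit (A i i)
    · -- a unit on the diagonal
      obtain ⟨i, hi⟩ := hdiag
      haveI : Unique {x : m // x = i} := ⟨⟨⟨i, rfl⟩⟩, by rintro ⟨x, rfl⟩; rfl⟩
      set e : ({x : m // x = i} ⊕ {x : m // ¬ x = i}) ≃ m := Equiv.sumCompl (· = i) with he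
      have hdd : (A.submatrix e e).toBlocks₁₁ default default = A i i := by
        show A (e (Sum.inl default)) (e (Sum.inl default)) = A i i
        rw [he, Equiv.sumCompl_apply_inl]
        have hd : ((default : {x : m // x = i}) : m) = i := (default : {x : m // x = i}).2
        rw [hd]
      have h11 : IsUnit ((A.submatrix e e).toBlocks₁₁).det := by
        rw [Matrix.det_unique, hdd]; exact hi
      obtain ⟨S, hSsymm, hSdet, hcong⟩ := split_step A e hsymm hdet h11
      have hcardβ : Fintype.card {x : m // ¬ x = i} = N - 1 := by
        rw [Fintype.card_subtype_compl, Fintype.card_subtype_eq, hcard]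
      obtain ⟨k₁, k₂, k₃, k₄, hk, hcong2⟩ :=
        ih (N - 1) (by omega) {x : m // ¬ x = i} S hSsymm hSdet hcardβ
      have ha2 : Cong ((A.submatrix e e).toBlocks₁₁) !![A i i] := by
        have := cong_unique ((A.submatrix e e).toBlocks₁₁)
        rwa [hdd] at this
      rcases unit_cases _ hi with h1 | h3
      · rw [h1] at ha2
        refine ⟨k₁ + 1, k₂, k₃, k₄, by omega, ?_⟩
        refine cong_trans hcong (cong_trans (cong_fromBlocks ha2 hcong2) ?_)
        exact ⟨e₁ k₁ k₂ k₃ k₄, 1, by simp,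
          by rw [Matrix.transpose_one, Matrix.one_mul, Matrix.mul_one, E1]⟩
      · rw [h3] at ha2
        refine ⟨k₁, k₂ + 1, k₃, k₄, by omega, ?_⟩
        refine cong_trans hcong (cong_trans (cong_fromBlocks ha2 hcong2) ?_)
        exact ⟨e₂ k₁ k₂ k₃ k₄, 1, by simp,
          by rw [Matrix.transpose_one, Matrix.one_mul, Matrix.mul_one, E2]⟩
    · -- no unit on the diagonal
      push_neg at hdiag
      obtain ⟨i, j, hb⟩ := exists_unit_entry A hdet
      have hij : i ≠ j := by rintro rfl; exact hdiag i hb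
      set pe := pairEquiv i j hij with hpe
      set e : (Fin 2 ⊕ {x : m // ¬ (x = i ∨ x = j)}) ≃ m :=
        (pe.sumCongr (Equiv.refl _)).trans (Equiv.sumCompl (fun x => x = i ∨ x = j)) with he
      have hblock : (A.submatrix e e).toBlocks₁₁ = !![A i i, A i j; A i j, A j j] := by
        ext a a'
        show A (e (Sum.inl a)) (e (Sum.inl a')) = _
        fin_cases a <;> fin_cases a' <;>
          simp [he, hpe, pairEquiv, hAsym i j]
      have h11 : IsUnit ((A.submatrix e e).toBlocks₁₁).det := by
        rw [hblock]; exact det2_unit _ _ _ (hdiag i) (hdiag j) hb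
      obtain ⟨S, hSsymm, hSdet, hcong⟩ := split_step A e hsymm hdet h11
      have hcard2 : Fintype.card {x : m // x = i ∨ x = j} = 2 := by
        rw [← Fintype.card_congr (pairEquiv i j hij)]; rfl
      have hcardβ : Fintype.card {x : m // ¬ (x = i ∨ x = j)} = N - 2 := by
        rw [Fintype.card_subtype_compl, hcard2, hcard]
      have hNge2 : 2 ≤ N := by
        rw [← hcard2, ← hcard]; exact Fintype.card_subtype_le _
      obtain ⟨k₁, k₂, k₃, k₄, hk, hcong2⟩ :=
        ih (N - 2) (by omega) {x : m // ¬ (x = i ∨ x = j)} S hSsymm hSdet hcardβ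
      rcases norm2 (A i i) (A i j) (A j j) (hdiag i) (hdiag j) hb with ⟨P, hP, hPeq⟩ | ⟨P, hP, hPeq⟩
      · have ha2 : Cong ((A.submatrix e e).toBlocks₁₁) Hm := by
          refine ⟨Equiv.refl _, P, hP, ?_⟩
          rw [hblock, hPeq]
          rfl
        refine ⟨k₁, k₂, k₃ + 1, k₄, by omega, ?_⟩
        refine cong_trans hcong (cong_trans (cong_fromBlocks ha2 hcong2) ?_)
        exact ⟨e₃ k₁ k₂ k₃ k₄, 1, by simp,
          by rw [Matrix.transpose_one, Matrix.one_mul, Matrix.mul_one, E3]⟩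
      · have ha2 : Cong ((A.submatrix e e).toBlocks₁₁) M2 := by
          refine ⟨Equiv.refl _, P, hP, ?_⟩
          rw [hblock, hPeq]
          rfl
        refine ⟨k₁, k₂, k₃, k₄ + 1, by omega, ?_⟩
        refine cong_trans hcong (cong_trans (cong_fromBlocks ha2 hcong2) ?_)
        exact ⟨e₄ k₁ k₂ k₃ k₄, 1, by simp,
          by rw [Matrix.transpose_one, Matrix.one_mul, Matrix.mul_one, E4]⟩

end Stmt8Aux

/-- Every symmetric matrix over `ℤ/4ℤ` with invertible determinant is
congruent to a block-diagonal matrix built from `n₁` entries `1`, `n₂` entries `3`,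
`n₃` blocks `H` and `n₄` blocks `M₂`, with `n = n₁ + n₂ + 2n₃ + 2n₄`. -/
theorem stmt_8 (n : ℕ) (A : Matrix (Fin n) (Fin n) (ZMod 4))
    (hsymm : A.IsSymm) (hdet : IsUnit A.det) :
    ∃ (n₁ n₂ n₃ n₄ : ℕ), n = n₁ + n₂ + 2 * n₃ + 2 * n₄ ∧
      ∃ (e : Fin n ≃ ((Fin n₁ ⊕ Fin n₂) ⊕ ((Fin 2 × Fin n₃) ⊕ (Fin 2 × Fin n₄))))
        (P : Matrix (Fin n) (Fin n) (ZMod 4)),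
        IsUnit P.det ∧
        Pᵀ * A * P = (standardForm n₁ n₂ n₃ n₄).submatrix e e := by
  obtain ⟨n₁, n₂, n₃, n₄, hsum, hcong⟩ :=
    Stmt8Aux.key n (Fin n) A hsymm hdet (Fintype.card_fin n)
  exact ⟨n₁, n₂, n₃, n₄, hsum, hcong⟩
end

section
/- (Purity theorem) Let n : ℕ and let A be a symmetric n×n matrix over ℤ/4ℤ with IsUnit A.det. Then the Gauss sum S(A) satisfies Complex.normSq (S(A)) = 2^(3·n), i.e. |S(A)| = 2^(3n/2). -/
open Matrix

private lemma pow_val_add (u : ℂ) (hu : u ^ 4 = 1) (a b : ZMod 4) :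
    u ^ (a + b).val = u ^ a.val * u ^ b.val := by
  rw [ZMod.val_add, ← pow_add]
  conv_rhs => rw [← Nat.div_add_mod (a.val + b.val) 4]
  rw [pow_add, pow_mul, hu, one_pow, one_mul]

private lemma pow_val_sum (u : ℂ) (hu : u ^ 4 = 1) {ι : Type*} (s : Finset ι)
    (f : ι → ZMod 4) :
    u ^ (∑ i ∈ s, f i).val = ∏ i ∈ s, u ^ (f i).val := by
  classical
  induction s using Finset.induction with
  | empty => simp
  | @insert a s h ih => rw [Finset.sum_insert h, pow_val_add u hu, ih, Finset.prod_insert h]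

private lemma sum_zmod4 (f : ZMod 4 → ℂ) : ∑ c, f c = f 0 + f 1 + f 2 + f 3 := by
  show ∑ i : Fin 4, f i = _
  exact Fin.sum_univ_four f

private lemma zmod4_cases (a : ZMod 4) : a = 0 ∨ a = 1 ∨ a = 2 ∨ a = 3 := by
  revert a; decide

private lemma chi_two_mul (c : ZMod 4) :
    Complex.I ^ (2 * c).val = (-1 : ℂ) ^ c.val := by
  rcases zmod4_cases c with h | h | h | h <;> subst h
  · show Complex.I ^ 0 = (-1:ℂ) ^ 0; norm_num
  · show Complex.I ^ 2 = (-1:ℂ) ^ 1; norm_num [Complex.I_sq]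
  · show Complex.I ^ 0 = (-1:ℂ) ^ 2; norm_num
  · show Complex.I ^ 2 = (-1:ℂ) ^ 3; norm_num [Complex.I_sq]

private lemma T_eval (a : ZMod 4) :
    (∑ c : ZMod 4, (-1 : ℂ) ^ ((c * a).val)) = if 2 * a = 0 then 4 else 0 := by
  rw [sum_zmod4]
  rcases zmod4_cases a with h | h | h | h <;> subst h
  · rw [if_pos (by decide)]
    show (-1:ℂ)^0 + (-1:ℂ)^0 + (-1:ℂ)^0 + (-1:ℂ)^0 = 4
    norm_num
  · rw [if_neg (by decide)]
    show (-1:ℂ)^0 + (-1:ℂ)^1 + (-1:ℂ)^2 + (-1:ℂ)^3 = 0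
    norm_num
  · rw [if_pos (by decide)]
    show (-1:ℂ)^0 + (-1:ℂ)^2 + (-1:ℂ)^0 + (-1:ℂ)^2 = 4
    norm_num
  · rw [if_neg (by decide)]
    show (-1:ℂ)^0 + (-1:ℂ)^3 + (-1:ℂ)^2 + (-1:ℂ)^1 = 0
    norm_num

private lemma halve (a : ZMod 4) (h : 2 * a = 0) : a = 2 * (if a = 2 then 1 else 0) := by
  revert h; revert a; decide

/-- Purity theorem.  For a symmetric matrix `A` over `ℤ/4ℤ` with invertible
determinant, the Gauss sum `S(A) = ∑_x i^(xᵀAx).val` satisfies `|S(A)|² = 2^(3n)`. -/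
theorem stmt_10 (n : ℕ) (A : Matrix (Fin n) (Fin n) (ZMod 4))
    (hsymm : A.IsSymm) (hdet : IsUnit A.det) :
    Complex.normSq
        (∑ x : Fin n → ZMod 4, Complex.I ^ (dotProduct x (A.mulVec x)).val)
      = 2 ^ (3 * n) := by
  classical
  set Q : (Fin n → ZMod 4) → ZMod 4 := fun x => dotProduct x (A.mulVec x) with hQ
  set S : ℂ := ∑ x : Fin n → ZMod 4, Complex.I ^ (Q x).val with hS
  -- injectivity of mulVec
  have hinj : ∀ v : Fin n → ZMod 4, A.mulVec v = 0 → v = 0 := by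
    intro v hv
    have := congrArg (A⁻¹.mulVec) hv
    rwa [Matrix.mulVec_mulVec, Matrix.nonsing_inv_mul A hdet, Matrix.one_mulVec,
      Matrix.mulVec_zero] at this
  -- symmetry of the bilinear form
  have hsym : ∀ y z : Fin n → ZMod 4, dotProduct z (A.mulVec y) = dotProduct y (A.mulVec z) := by
    intro y z
    rw [Matrix.dotProduct_mulVec, ← Matrix.mulVec_transpose, hsymm.eq, dotProduct_comm]
  have hexp : ∀ y z : Fin n → ZMod 4,
      Q (y + z) = Q y + (Q z + 2 * dotProduct y (A.mulVec z)) := by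
    intro y z
    simp only [hQ, Matrix.mulVec_add, dotProduct_add, add_dotProduct]
    rw [hsym y z]; ring
  -- the key identity
  have key : S * (starRingEnd ℂ) S = (2 : ℂ) ^ (3 * n) := by
    have hconj : (starRingEnd ℂ) S = ∑ y : Fin n → ZMod 4, (-Complex.I) ^ (Q y).val := by
      rw [hS, map_sum]
      exact Finset.sum_congr rfl fun y _ => by rw [map_pow, Complex.conj_I]
    rw [hconj, hS, Finset.sum_mul_sum, Finset.sum_comm]
    have step1 : ∀ y : Fin n → ZMod 4,
        (∑ x : Fin n → ZMod 4, Complex.I ^ (Q x).val * (-Complex.I) ^ (Q y).val)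
        = ∑ z : Fin n → ZMod 4,
            Complex.I ^ (Q z).val * (-1 : ℂ) ^ ((dotProduct y (A.mulVec z)).val) := by
      intro y
      rw [← Equiv.sum_comp (Equiv.addLeft y)
        (fun x => Complex.I ^ (Q x).val * (-Complex.I) ^ (Q y).val)]
      refine Finset.sum_congr rfl fun z _ => ?_
      have hz : (Equiv.addLeft y) z = y + z := rfl
      rw [hz, hexp y z]
      calc Complex.I ^ (Q y + (Q z + 2 * dotProduct y (A.mulVec z))).val
            * (-Complex.I) ^ (Q y).val
          = (Complex.I * -Complex.I) ^ (Q y).val *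
              (Complex.I ^ (Q z).val * (-1 : ℂ) ^ ((dotProduct y (A.mulVec z)).val)) := by
            rw [pow_val_add _ Complex.I_pow_four, pow_val_add _ Complex.I_pow_four,
              chi_two_mul, mul_pow]
            ring
        _ = _ := by norm_num
    rw [Finset.sum_congr rfl fun y _ => step1 y, Finset.sum_comm]
    -- now : ∑ z, ∑ y, I^(Q z).val * (-1)^(y ⬝ᵥ A z).val
    have step2 : ∀ z : Fin n → ZMod 4,
        (∑ y : Fin n → ZMod 4,
            Complex.I ^ (Q z).val * (-1 : ℂ) ^ ((dotProduct y (A.mulVec z)).val))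
        = ∏ i, (if 2 * z i = 0 then (4 : ℂ) else 0) := by
      intro z
      rw [← Finset.mul_sum]
      have hm1 : ((-1 : ℂ)) ^ 4 = 1 := by norm_num
      have inner : (∑ y : Fin n → ZMod 4, (-1 : ℂ) ^ ((dotProduct y (A.mulVec z)).val))
          = ∏ i, (if 2 * (A.mulVec z) i = 0 then (4 : ℂ) else 0) := by
        have e1 : ∀ y : Fin n → ZMod 4, (-1 : ℂ) ^ ((dotProduct y (A.mulVec z)).val)
            = ∏ i, (-1 : ℂ) ^ ((y i * (A.mulVec z) i).val) := fun y =>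
          pow_val_sum (-1) hm1 Finset.univ fun i => y i * (A.mulVec z) i
        rw [Finset.sum_congr rfl fun y _ => e1 y,
          ← Fintype.prod_sum fun i c => (-1 : ℂ) ^ ((c * (A.mulVec z) i).val)]
        exact Finset.prod_congr rfl fun i _ => T_eval _
      rw [inner]
      -- stage B : replace condition on A z by condition on z
      by_cases h : ∀ i, 2 * z i = 0
      · have hz0 : (2 : ZMod 4) • z = 0 := funext fun i => h i
        have hAz : ∀ i, 2 * (A.mulVec z) i = 0 := by
          intro i
          have : A.mulVec ((2 : ZMod 4) • z) = (2 : ZMod 4) • A.mulVec z :=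
            Matrix.mulVec_smul A 2 z
          rw [hz0, Matrix.mulVec_zero] at this
          have := congrFun this i
          simpa using this.symm
        have hQz : Q z = 0 := by
          set u : Fin n → ZMod 4 := fun i => if z i = 2 then 1 else 0 with hu
          have hzu : z = (2 : ZMod 4) • u := funext fun i => by
            simpa [hu] using halve (z i) (h i)
          rw [hQ]
          show dotProduct z (A.mulVec z) = 0
          rw [hzu, Matrix.mulVec_smul, dotProduct_smul, smul_dotProduct,
            smul_smul]
          simp [show ((2 : ZMod 4) * 2) = 0 from rfl, show (4 : ZMod 4) = 0 from by decide]
        rw [hQz]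
        simp [h, hAz]
      · push_neg at h
        obtain ⟨i, hi⟩ := h
        have h2 : ∃ j, 2 * (A.mulVec z) j ≠ 0 := by
          by_contra hc
          push_neg at hc
          have : A.mulVec ((2 : ZMod 4) • z) = 0 := by
            rw [Matrix.mulVec_smul]
            exact funext fun j => by simpa using hc j
          have := congrFun (hinj _ this) i
          simp only [Pi.smul_apply, smul_eq_mul, Pi.zero_apply] at this
          exact hi this
        obtain ⟨j, hj⟩ := h2
        have hpz : (∏ k, (if 2 * (A.mulVec z) k = 0 then (4 : ℂ) else 0)) = 0 :=
          Finset.prod_eq_zero (Finset.mem_univ j)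
            (if_neg hj : (if 2 * (A.mulVec z) j = 0 then (4 : ℂ) else 0) = 0)
        have hpz' : (∏ k, (if 2 * z k = 0 then (4 : ℂ) else 0)) = 0 :=
          Finset.prod_eq_zero (Finset.mem_univ i)
            (if_neg hi : (if 2 * z i = 0 then (4 : ℂ) else 0) = 0)
        rw [hpz, hpz', mul_zero]
    rw [Finset.sum_congr rfl fun z _ => step2 z,
      ← Fintype.prod_sum fun (i : Fin n) (c : ZMod 4) => (if 2 * c = 0 then (4 : ℂ) else 0)]
    have hcol : ∀ i : Fin n, (∑ c : ZMod 4, (if 2 * c = 0 then (4 : ℂ) else 0)) = 8 := by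
      intro i
      rw [sum_zmod4, if_pos (by decide : (2*(0:ZMod 4)) = 0),
        if_neg (by decide : ¬(2*(1:ZMod 4)) = 0),
        if_pos (by decide : (2*(2:ZMod 4)) = 0),
        if_neg (by decide : ¬(2*(3:ZMod 4)) = 0)]
      norm_num
    rw [Finset.prod_congr rfl fun i _ => hcol i, Finset.prod_const, Finset.card_univ,
      Fintype.card_fin]
    rw [show (8 : ℂ) = 2 ^ 3 by norm_num, ← pow_mul]
  have : ((Complex.normSq S : ℝ) : ℂ) = (((2 : ℝ) ^ (3 * n) : ℝ) : ℂ) := by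
    rw [← Complex.mul_conj, key]; push_cast; ring
  exact_mod_cast this
end

section
/- Let n : ℕ and let A be a symmetric n×n matrix over ℤ/4ℤ with IsUnit A.det. Then the fourth power of the Gauss sum satisfies S(A)⁴ = (−1)^n · 2^(6·n). -/
open Matrix Finset

noncomputable def ee (v : ZMod 4) : ℂ := Complex.I ^ v.val

def ph : ZMod 4 →+* ZMod 2 := ZMod.castHom (show 2 ∣ 4 by norm_num) (ZMod 2)

lemma I_pow_mod (k : ℕ) : Complex.I ^ k = Complex.I ^ (k % 4) := by
  conv_lhs => rw [← Nat.div_add_mod k 4]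
  rw [pow_add, pow_mul, Complex.I_pow_four, one_pow, one_mul]

lemma ee_add (a b : ZMod 4) : ee (a + b) = ee a * ee b := by
  unfold ee
  rw [← pow_add, ZMod.val_add, ← I_pow_mod]

lemma ee_zero : ee 0 = 1 := by simp [ee, ZMod.val_zero]

lemma ee_sum {ι : Type*} (s : Finset ι) (f : ι → ZMod 4) :
    ee (∑ i ∈ s, f i) = ∏ i ∈ s, ee (f i) := by
  induction s using Finset.cons_induction with
  | empty => simpa using ee_zero
  | cons i s hi ih => rw [Finset.sum_cons, Finset.prod_cons, ee_add, ih]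

lemma ee2 : ee 2 = -1 := by
  have : (2 : ZMod 4).val = 2 := rfl
  rw [ee, this, Complex.I_sq]

lemma sum_ee (c : ZMod 4) : ∑ t : ZMod 4, ee (2 * c * t) = if 2 * c = 0 then 4 else 0 := by
  have huniv : (Finset.univ : Finset (ZMod 4)) = {0, 1, 2, 3} := by decide
  rw [huniv]
  rw [show ({0,1,2,3} : Finset (ZMod 4)) = insert 0 (insert 1 (insert 2 {3})) from rfl,
    Finset.sum_insert (by decide), Finset.sum_insert (by decide),
    Finset.sum_insert (by decide), Finset.sum_singleton]
  have hc := (by decide : ∀ c : ZMod 4, c = 0 ∨ c = 1 ∨ c = 2 ∨ c = 3) c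
  rcases hc with rfl | rfl | rfl | rfl
  · rw [if_pos (by decide),
      show (2*0*0 : ZMod 4) = 0 from by decide, show (2*0*1 : ZMod 4) = 0 from by decide,
      show (2*0*2 : ZMod 4) = 0 from by decide, show (2*0*3 : ZMod 4) = 0 from by decide,
      ee_zero]
    ring
  · rw [if_neg (by decide),
      show (2*1*0 : ZMod 4) = 0 from by decide, show (2*1*1 : ZMod 4) = 2 from by decide,
      show (2*1*2 : ZMod 4) = 0 from by decide, show (2*1*3 : ZMod 4) = 2 from by decide,
      ee_zero, ee2]
    ring
  · rw [if_pos (by decide),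
      show (2*2*0 : ZMod 4) = 0 from by decide, show (2*2*1 : ZMod 4) = 0 from by decide,
      show (2*2*2 : ZMod 4) = 0 from by decide, show (2*2*3 : ZMod 4) = 0 from by decide,
      ee_zero]
    ring
  · rw [if_neg (by decide),
      show (2*3*0 : ZMod 4) = 0 from by decide, show (2*3*1 : ZMod 4) = 2 from by decide,
      show (2*3*2 : ZMod 4) = 0 from by decide, show (2*3*3 : ZMod 4) = 2 from by decide,
      ee_zero, ee2]
    ring

-- decide facts about ph
lemma ph_cancel : ∀ a b : ZMod 4, ph a = ph b → 2 * a = 2 * b := by decide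
lemma two_mul_eq_zero_iff : ∀ a : ZMod 4, 2 * a = 0 ↔ ph a = 0 := by decide

def lft : ZMod 2 → ZMod 4 := fun b => if b = 0 then 0 else 1
lemma ph_lft : ∀ b : ZMod 2, ph (lft b) = b := by decide
lemma eq_two_mul_of_ph_zero : ∀ a : ZMod 4, ph a = 0 → a = 2 * (if a = 0 then 0 else 1) := by decide
lemma card_fiber : ∀ b : ZMod 2, (Finset.filter (fun a : ZMod 4 => ph a = b) Finset.univ).card = 2 := by decide

-- multivariate character sum
lemma sum_ee_pi {n : ℕ} (c : Fin n → ZMod 4) :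
    ∑ x : Fin n → ZMod 4, ee (2 * dotProduct c x)
      = if (∀ i, 2 * c i = 0) then (4 : ℂ) ^ n else 0 := by
  have h1 : ∀ x : Fin n → ZMod 4, ee (2 * dotProduct c x) = ∏ i, ee (2 * c i * x i) := by
    intro x
    rw [dotProduct, Finset.mul_sum, ee_sum]
    exact Finset.prod_congr rfl fun i _ => by rw [mul_assoc]
  simp only [h1]
  rw [← Fintype.piFinset_univ,
    ← Finset.prod_univ_sum (t := fun _ : Fin n => (Finset.univ : Finset (ZMod 4)))
      (f := fun i t => ee (2 * c i * t))]
  simp only [sum_ee]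
  by_cases h : ∀ i, 2 * c i = 0
  · rw [if_pos h]
    rw [Finset.prod_congr rfl (fun i _ => if_pos (h i))]
    simp
  · rw [if_neg h]
    push_neg at h
    obtain ⟨i0, hi0⟩ := h
    exact Finset.prod_eq_zero (Finset.mem_univ i0) (if_neg hi0)

-- generic: sum of symmetric function equals diagonal sum, over ZMod 2
lemma sum_sum_eq_diag {n : ℕ} (f : Fin n → Fin n → ZMod 2) (hf : ∀ i j, f j i = f i j) :
    ∑ i, ∑ j, f i j = ∑ i, f i i := by
  rw [← Finset.sum_product' (s := Finset.univ) (t := Finset.univ)]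
  rw [← Finset.diag_union_offDiag (Finset.univ : Finset (Fin n)),
    Finset.sum_union (Finset.disjoint_diag_offDiag _)]
  have hoff : ∑ p ∈ (Finset.univ : Finset (Fin n)).offDiag, f p.1 p.2 = 0 := by
    apply Finset.sum_involution (fun p _ => p.swap)
    · intro p hp
      simp only [Prod.fst_swap, Prod.snd_swap, hf p.1 p.2]
      exact (by decide : ∀ a : ZMod 2, a + a = 0) _
    · intro p hp _
      rw [Finset.mem_offDiag] at hp
      intro hc
      exact hp.2.2 (congrArg Prod.fst hc).symm
    · intro p hp
      simp
    · intro p hp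
      rw [Finset.mem_offDiag] at hp ⊢
      exact ⟨Finset.mem_univ _, Finset.mem_univ _, fun hq => hp.2.2 hq.symm⟩
  rw [hoff, add_zero, Finset.sum_diag]

lemma quad_diag {n : ℕ} (M : Matrix (Fin n) (Fin n) (ZMod 2)) (h : M.IsSymm) (y : Fin n → ZMod 2) :
    dotProduct y (M.mulVec y) = ∑ i, M i i * y i := by
  have expand : dotProduct y (M.mulVec y) = ∑ i, ∑ j, M i j * y i * y j := by
    simp only [dotProduct, Matrix.mulVec]
    refine Finset.sum_congr rfl fun i _ => ?_
    rw [Finset.mul_sum]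
    exact Finset.sum_congr rfl fun j _ => by ring
  rw [expand, sum_sum_eq_diag (fun i j => M i j * y i * y j)
    (fun i j => by show M j i * y j * y i = M i j * y i * y j; rw [h.apply i j]; ring)]
  refine Finset.sum_congr rfl fun i _ => ?_
  rw [mul_assoc, (by decide : ∀ a : ZMod 2, a * a = a) (y i)]

lemma ph_Q {n : ℕ} (A : Matrix (Fin n) (Fin n) (ZMod 4)) (v : Fin n → ZMod 4) :
    ph (dotProduct v (A.mulVec v))
      = dotProduct (fun i => ph (v i)) ((A.map ph).mulVec (fun i => ph (v i))) := by
  simp only [dotProduct, Matrix.mulVec, Matrix.map_apply, map_sum, _root_.map_mul]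

lemma two_mul_Q {n : ℕ} (A : Matrix (Fin n) (Fin n) (ZMod 4)) (hsymm : A.IsSymm)
    (v : Fin n → ZMod 4) :
    2 * dotProduct v (A.mulVec v) = 2 * dotProduct (fun i => A i i) v := by
  apply ph_cancel
  rw [ph_Q, quad_diag _ (hsymm.map ph) _]
  simp only [dotProduct, map_sum, _root_.map_mul, Matrix.map_apply]

lemma Q_add {n : ℕ} (A : Matrix (Fin n) (Fin n) (ZMod 4)) (hsymm : A.IsSymm)
    (x z : Fin n → ZMod 4) :
    dotProduct (x + z) (A.mulVec (x + z))
      = dotProduct x (A.mulVec x) + dotProduct z (A.mulVec z)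
        + 2 * dotProduct x (A.mulVec z) := by
  rw [Matrix.mulVec_add, dotProduct_add, add_dotProduct, add_dotProduct]
  have hz : dotProduct z (A.mulVec x) = dotProduct x (A.mulVec z) := by
    rw [Matrix.dotProduct_mulVec, ← Matrix.mulVec_transpose, hsymm.eq, dotProduct_comm]
  rw [hz]; ring

lemma Q_shift {n : ℕ} (A : Matrix (Fin n) (Fin n) (ZMod 4)) (hsymm : A.IsSymm)
    (w u : Fin n → ZMod 4) :
    dotProduct (w + (2:ZMod 4) • u) (A.mulVec (w + (2:ZMod 4) • u))
      = dotProduct w (A.mulVec w) := by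
  rw [Q_add A hsymm w ((2:ZMod 4) • u)]
  rw [Matrix.mulVec_smul, dotProduct_smul, smul_dotProduct, dotProduct_smul]
  rw [smul_smul, smul_eq_mul, smul_eq_mul]
  have h4 : (4 : ZMod 4) = 0 := by decide
  linear_combination (dotProduct u (A.mulVec u) + dotProduct w (A.mulVec u)) * h4

lemma inv_diag_parity {n : ℕ} (B : Matrix (Fin n) (Fin n) (ZMod 2)) (hs : B.IsSymm)
    (hd : IsUnit B.det) :
    dotProduct (fun i => B i i) (B⁻¹.mulVec (fun i => B i i)) = (n : ZMod 2) := by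
  have hCs : (B⁻¹).IsSymm := by
    rw [Matrix.IsSymm, Matrix.transpose_nonsing_inv, hs.eq]
  rw [quad_diag _ hCs]
  have htr : ∑ i, ∑ j, B i j * B⁻¹ j i = (n : ZMod 2) := by
    have h1 : ∀ i, ∑ j, B i j * B⁻¹ j i = (B * B⁻¹) i i := fun i => (Matrix.mul_apply).symm
    rw [Finset.sum_congr rfl fun i _ => h1 i, Matrix.mul_nonsing_inv _ hd]
    simp [Matrix.one_apply]
  rw [← htr, sum_sum_eq_diag (fun i j => B i j * B⁻¹ j i)
    (fun i j => by show B j i * B⁻¹ i j = B i j * B⁻¹ j i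
                   rw [hs.apply i j, hCs.apply j i])]
  exact Finset.sum_congr rfl fun i _ => by ring

lemma I_pow_mod' (k : ℕ) : Complex.I ^ k = Complex.I ^ (k % 4) := by
  conv_lhs => rw [← Nat.div_add_mod k 4]
  rw [pow_add, pow_mul, Complex.I_pow_four, one_pow, one_mul]

lemma neg_one_pow_mod (k : ℕ) : (-1 : ℂ) ^ k = (-1) ^ (k % 2) := by
  conv_lhs => rw [← Nat.div_add_mod k 2]
  rw [pow_add, pow_mul, neg_one_sq, one_pow, one_mul]

lemma val_ph : ∀ a : ZMod 4, (ph a).val = a.val % 2 := by decide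

/-- For a symmetric matrix `A` over `ℤ/4ℤ` with invertible determinant, the
fourth power of the Gauss sum `S(A) = ∑_x i^(xᵀAx).val` equals `(-1)^n · 2^(6n)`. -/
theorem stmt_13 (n : ℕ) (A : Matrix (Fin n) (Fin n) (ZMod 4))
    (hsymm : A.IsSymm) (hdet : IsUnit A.det) :
    (∑ x : Fin n → ZMod 4, Complex.I ^ (dotProduct x (A.mulVec x)).val) ^ 4
      = (-1) ^ n * 2 ^ (6 * n) := by
  classical
  have hrw : (∑ x : Fin n → ZMod 4, Complex.I ^ (dotProduct x (A.mulVec x)).val)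
      = ∑ x : Fin n → ZMod 4, ee (dotProduct x (A.mulVec x)) := rfl
  rw [hrw]
  set Q : (Fin n → ZMod 4) → ZMod 4 := fun x => dotProduct x (A.mulVec x) with hQ
  set S : ℂ := ∑ x : Fin n → ZMod 4, ee (Q x) with hS
  set d : Fin n → ZMod 4 := fun i => A i i with hd
  set B : Matrix (Fin n) (Fin n) (ZMod 2) := A.map ph with hB
  have hBs : B.IsSymm := hsymm.map ph
  have hdetB : IsUnit B.det := by
    have h := hdet.map ph
    rwa [RingHom.map_det] at h
  set db : Fin n → ZMod 2 := fun i => B i i with hdb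
  set w0 : Fin n → ZMod 2 := B⁻¹.mulVec db with hw0
  have hBw0 : B.mulVec w0 = db := by
    rw [hw0, Matrix.mulVec_mulVec, Matrix.mul_nonsing_inv _ hdetB, Matrix.one_mulVec]
  set w : Fin n → ZMod 4 := fun i => lft (w0 i) with hw
  have hphw : ∀ i, ph (w i) = w0 i := fun i => ph_lft _
  -- Step 1: S² = 4^n · 2^n · ee (Q w)
  have key : S ^ 2 = 4 ^ n * (2 ^ n * ee (Q w)) := by
    have e1 : S ^ 2 = ∑ x : Fin n → ZMod 4, ∑ z : Fin n → ZMod 4,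
        ee (Q z) * ee (2 * dotProduct (d + A.mulVec z) x) := by
      rw [sq, hS, Finset.sum_mul_sum]
      refine Finset.sum_congr rfl fun x _ => ?_
      rw [← Equiv.sum_comp (Equiv.addLeft x) (fun y => ee (Q x) * ee (Q y))]
      refine Finset.sum_congr rfl fun z _ => ?_
      simp only [Equiv.coe_addLeft]
      rw [← ee_add, ← ee_add]
      congr 1
      simp only [hQ]
      calc dotProduct x (A.mulVec x) + dotProduct (x+z) (A.mulVec (x+z))
          = dotProduct z (A.mulVec z)
            + (2 * dotProduct x (A.mulVec x)
               + 2 * dotProduct x (A.mulVec z)) := by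
            rw [Q_add A hsymm x z]; ring
        _ = dotProduct z (A.mulVec z)
            + (2 * dotProduct d x + 2 * dotProduct (A.mulVec z) x) := by
            rw [two_mul_Q A hsymm x, dotProduct_comm x (A.mulVec z)]
        _ = dotProduct z (A.mulVec z)
            + 2 * dotProduct (d + A.mulVec z) x := by
            rw [add_dotProduct]; ring
    have e2 : S ^ 2 = ∑ z : Fin n → ZMod 4,
        ee (Q z) * (if (∀ i, 2 * (d + A.mulVec z) i = 0) then (4:ℂ) ^ n else 0) := by
      rw [e1, Finset.sum_comm]
      exact Finset.sum_congr rfl fun z _ => by rw [← Finset.mul_sum, sum_ee_pi]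
    have hcond : ∀ z : Fin n → ZMod 4,
        (∀ i, 2 * (d + A.mulVec z) i = 0) ↔ (fun i => ph (z i)) = w0 := by
      intro z
      have hmv : ∀ i, ph ((A.mulVec z) i) = (B.mulVec (fun j => ph (z j))) i := by
        intro i
        simp only [Matrix.mulVec, dotProduct, hB, Matrix.map_apply, map_sum,
          _root_.map_mul]
      constructor
      · intro h
        have h2 : ∀ i, db i + (B.mulVec (fun j => ph (z j))) i = 0 := by
          intro i
          have := (two_mul_eq_zero_iff _).mp (h i)
          rw [Pi.add_apply, map_add, hmv i] at this
          exact this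
        have h3 : B.mulVec (fun j => ph (z j)) = db := by
          funext i
          have := h2 i
          have hc : ∀ a b : ZMod 2, a + b = 0 → b = a := by decide
          exact hc _ _ this
        have h4 : B⁻¹.mulVec (B.mulVec (fun j => ph (z j))) = B⁻¹.mulVec db := by rw [h3]
        rwa [Matrix.mulVec_mulVec, Matrix.nonsing_inv_mul _ hdetB, Matrix.one_mulVec] at h4
      · intro h
        intro i
        rw [two_mul_eq_zero_iff, Pi.add_apply, map_add, hmv i, h, hBw0]
        exact (by decide : ∀ a : ZMod 2, a + a = 0) _
    have e3 : S ^ 2 = ∑ z ∈ Finset.filter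
        (fun z : Fin n → ZMod 4 => (fun i => ph (z i)) = w0) Finset.univ, ee (Q z) * 4 ^ n := by
      rw [e2]
      rw [Finset.sum_filter]
      refine Finset.sum_congr rfl fun z _ => ?_
      rw [if_congr (hcond z) rfl rfl]
      split_ifs <;> simp
    have hval : ∀ z ∈ Finset.filter
        (fun z : Fin n → ZMod 4 => (fun i => ph (z i)) = w0) Finset.univ, ee (Q z) = ee (Q w) := by
      intro z hz
      rw [Finset.mem_filter] at hz
      have hz2 := hz.2
      have hzw : ∀ i, ph (z i - w i) = 0 := by
        intro i
        rw [map_sub, congrFun hz2 i, hphw i, sub_self]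
      set u : Fin n → ZMod 4 := fun i => if z i - w i = 0 then 0 else 1 with hu
      have hzu : z = w + (2:ZMod 4) • u := by
        funext i
        have h2 := eq_two_mul_of_ph_zero (z i - w i) (hzw i)
        simp only [Pi.add_apply, Pi.smul_apply, smul_eq_mul, hu]
        rw [← h2]
        ring
      rw [hzu]
      simp only [hQ]
      rw [Q_shift A hsymm w u]
    have hcard : (Finset.filter
        (fun z : Fin n → ZMod 4 => (fun i => ph (z i)) = w0) Finset.univ).card = 2 ^ n := by
      have hpi : Finset.filter (fun z : Fin n → ZMod 4 => (fun i => ph (z i)) = w0) Finset.univ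
          = Fintype.piFinset (fun i => Finset.filter (fun a : ZMod 4 => ph a = w0 i)
              Finset.univ) := by
        ext z
        simp [Fintype.mem_piFinset, funext_iff]
      rw [hpi, Fintype.card_piFinset]
      simp [card_fiber]
    rw [e3, Finset.sum_congr rfl fun z hz => by rw [hval z hz], Finset.sum_const, hcard]
    simp only [nsmul_eq_mul]
    push_cast
    ring
  -- Step 2: parity of Q w
  have hphQw : ph (Q w) = (n : ZMod 2) := by
    simp only [hQ]
    rw [ph_Q]
    have : (fun i => ph (w i)) = w0 := funext hphw
    rw [this, hBw0, dotProduct_comm, hw0]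
    exact inv_diag_parity B hBs hdetB
  have hvalQw : (Q w).val % 2 = n % 2 := by
    have h1 := val_ph (Q w)
    rw [hphQw, ZMod.val_natCast] at h1
    exact h1.symm
  -- Step 3: conclude
  have hS4 : S ^ 4 = (S ^ 2) ^ 2 := by ring
  rw [hS4, key]
  have hee2 : ee (Q w) ^ 2 = (-1 : ℂ) ^ n := by
    rw [show ee (Q w) = Complex.I ^ (Q w).val from rfl, ← pow_mul, mul_comm, pow_mul,
      Complex.I_sq, neg_one_pow_mod, hvalQw, ← neg_one_pow_mod]
  calc ((4:ℂ) ^ n * (2 ^ n * ee (Q w))) ^ 2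
      = ((4:ℂ) ^ n) ^ 2 * ((2:ℂ) ^ n) ^ 2 * ee (Q w) ^ 2 := by ring
    _ = (2:ℂ) ^ (6 * n) * (-1) ^ n := by
        rw [hee2, show (4:ℂ) = 2 ^ 2 from by norm_num, ← pow_mul, ← pow_mul, ← pow_mul,
          ← pow_add]
        congr 1
        ring
    _ = (-1) ^ n * 2 ^ (6 * n) := by ring
end

section
/- Let n : ℕ and let A be a symmetric n×n matrix over ℤ/4ℤ with IsUnit A.det. If 4 ∣ n and A.det = 1, then the Gauss sum satisfies S(A)² = 2^(3·n). -/
open Matrix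

noncomputable def GS {m : Type*} [Fintype m] [DecidableEq m] (A : Matrix m m (ZMod 4)) : ℂ :=
  ∑ x : m → ZMod 4, Complex.I ^ (dotProduct x (A.mulVec x)).val

noncomputable def eps (d : ZMod 4) : ℂ := if d = 1 then 1 else -1

def gi : GaussianInt := ⟨0, 1⟩

lemma gi_toComplex : GaussianInt.toComplex gi = Complex.I := by
  simp [gi, GaussianInt.toComplex_def]

lemma I_pow_eq (k : ℕ) : Complex.I ^ k = GaussianInt.toComplex (gi ^ k) := by
  rw [map_pow, gi_toComplex]

lemma I_pow_mod4 (k : ℕ) : Complex.I ^ (k % 4) = Complex.I ^ k := by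
  conv_rhs => rw [← Nat.div_add_mod k 4]
  rw [pow_add, pow_mul, Complex.I_pow_four, one_pow, one_mul]

lemma I_pow_val_add (a b : ZMod 4) :
    Complex.I ^ (a + b).val = Complex.I ^ a.val * Complex.I ^ b.val := by
  rw [ZMod.val_add, I_pow_mod4, pow_add]

lemma GS_toComplex {m : Type*} [Fintype m] [DecidableEq m] (A : Matrix m m (ZMod 4)) :
    GS A = GaussianInt.toComplex
      (∑ x : m → ZMod 4, gi ^ (dotProduct x (A.mulVec x)).val) := by
  rw [map_sum]; exact Finset.sum_congr rfl fun x _ => I_pow_eq _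

lemma GS_submatrix {l m : Type*} [Fintype l] [Fintype m] [DecidableEq l] [DecidableEq m]
    (A : Matrix m m (ZMod 4)) (e : l ≃ m) : GS (A.submatrix e e) = GS A := by
  unfold GS
  apply Fintype.sum_equiv (Equiv.arrowCongr e (Equiv.refl (ZMod 4)))
  intro x
  have h : dotProduct x ((A.submatrix e e).mulVec x)
      = dotProduct ((Equiv.arrowCongr e (Equiv.refl (ZMod 4))) x)
          (A.mulVec ((Equiv.arrowCongr e (Equiv.refl (ZMod 4))) x)) := by
    rw [dotProduct, dotProduct]
    apply Fintype.sum_equiv e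
    intro i
    simp only [Equiv.arrowCongr_apply, Function.comp, Equiv.refl_apply, Equiv.symm_apply_apply,
      Matrix.mulVec, dotProduct, submatrix_apply]
    congr 1
    apply Fintype.sum_equiv e
    intro j
    simp
  rw [h]

lemma GS_congruence {m : Type*} [Fintype m] [DecidableEq m]
    (P A : Matrix m m (ZMod 4)) (hP : IsUnit P.det) :
    GS (Pᵀ * A * P) = GS A := by
  unfold GS
  haveI : Invertible P := P.invertibleOfIsUnitDet hP
  have hbij : Function.Bijective (fun y : m → ZMod 4 => P.mulVec y) := by
    constructor
    · intro a b hab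
      have := congrArg (fun v => (⅟P).mulVec v) hab
      simpa [Matrix.mulVec_mulVec, invOf_mul_self, Matrix.one_mulVec] using this
    · intro v
      exact ⟨(⅟P).mulVec v, by simp [Matrix.mulVec_mulVec, mul_invOf_self, Matrix.one_mulVec]⟩
  apply Fintype.sum_bijective _ hbij
  intro x
  congr 2
  rw [Matrix.mul_assoc, Matrix.dotProduct_mulVec, Matrix.dotProduct_mulVec,
    ← Matrix.vecMul_vecMul, Matrix.vecMul_transpose, ← Matrix.vecMul_vecMul,
    ← Matrix.dotProduct_mulVec]

lemma GS_fromBlocks {s t : Type*} [Fintype s] [Fintype t] [DecidableEq s] [DecidableEq t]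
    (B : Matrix s s (ZMod 4)) (C : Matrix t t (ZMod 4)) :
    GS (fromBlocks B 0 0 C) = GS B * GS C := by
  unfold GS
  rw [Finset.sum_mul_sum]
  rw [← Fintype.sum_prod_type']
  apply Fintype.sum_bijective (Equiv.sumArrowEquivProdArrow s t (ZMod 4))
    (Equiv.bijective _)
  intro x
  have hx : x = Sum.elim (x ∘ Sum.inl) (x ∘ Sum.inr) := by
    funext i; cases i <;> rfl
  rw [hx, Matrix.fromBlocks_mulVec]
  simp only [Matrix.zero_mulVec, add_zero, zero_add]
  rw [sumElim_dotProduct_sumElim, I_pow_val_add]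
  rfl

lemma zmod4_unit_iff : ∀ a : ZMod 4, IsUnit a ↔ a = 1 ∨ a = 3 := by decide

lemma eps_mul (a b : ZMod 4) (ha : IsUnit a) (hb : IsUnit b) :
    eps (a * b) = eps a * eps b := by
  rcases (zmod4_unit_iff a).1 ha with rfl | rfl <;>
    rcases (zmod4_unit_iff b).1 hb with rfl | rfl
  · rw [show (1 * 1 : ZMod 4) = 1 from rfl]; norm_num [eps]
  · rw [show (1 * 3 : ZMod 4) = 3 from rfl]; norm_num [eps, show (3 : ZMod 4) ≠ 1 from by decide]
  · rw [show (3 * 1 : ZMod 4) = 3 from rfl]; norm_num [eps, show (3 : ZMod 4) ≠ 1 from by decide]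
  · rw [show (3 * 3 : ZMod 4) = 1 from rfl]
    norm_num [eps, show (3 : ZMod 4) ≠ 1 from by decide]

lemma base1 (A : Matrix (Fin 1) (Fin 1) (ZMod 4)) (h : IsUnit A.det) :
    GS A ^ 2 = 8 ^ (1 : ℕ) * Complex.I ^ (1 : ℕ) * eps A.det := by
  obtain ⟨a, ha, hu⟩ : ∃ a, A = Matrix.of ![![a]] ∧ IsUnit a :=
    ⟨A 0 0, by ext i j; fin_cases i; fin_cases j; rfl, by rwa [Matrix.det_fin_one] at h⟩
  subst ha
  have hGS2 : GS (Matrix.of ![![a]]) ^ 2 = GaussianInt.toComplex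
      ((∑ x : Fin 1 → ZMod 4,
        gi ^ (dotProduct x ((Matrix.of ![![a]]).mulVec x)).val) ^ 2) := by
    rw [GS_toComplex, ← map_pow]
  rcases (zmod4_unit_iff a).1 hu with rfl | rfl
  · rw [hGS2, show (∑ x : Fin 1 → ZMod 4,
        gi ^ (dotProduct x ((Matrix.of ![![(1 : ZMod 4)]]).mulVec x)).val) ^ 2
        = (⟨0, 8⟩ : GaussianInt) from by decide]
    norm_num [GaussianInt.toComplex_def, eps, Matrix.det_fin_one]
  · rw [hGS2, show (∑ x : Fin 1 → ZMod 4,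
        gi ^ (dotProduct x ((Matrix.of ![![(3 : ZMod 4)]]).mulVec x)).val) ^ 2
        = (⟨0, -8⟩ : GaussianInt) from by decide]
    norm_num [GaussianInt.toComplex_def, eps, Matrix.det_fin_one,
      show (3 : ZMod 4) ≠ 1 from by decide]

lemma det2 : ∀ a b c : ZMod 4, ¬IsUnit a → ¬IsUnit c → IsUnit b → a * c - b * b = 3 := by
  decide

lemma isUnit3 : IsUnit (3 : ZMod 4) := by decide

lemma sq2 : ∀ a b c : ZMod 4, ¬IsUnit a → ¬IsUnit c → IsUnit b →
    (∑ x : Fin 2 → ZMod 4,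
      gi ^ (dotProduct x ((Matrix.of ![![a, b], ![b, c]]).mulVec x)).val) ^ 2 = 64 := by
  decide

lemma base2 (A : Matrix (Fin 2) (Fin 2) (ZMod 4)) (hs : A 1 0 = A 0 1)
    (h00 : ¬IsUnit (A 0 0)) (h11 : ¬IsUnit (A 1 1)) (h01 : IsUnit (A 0 1)) :
    GS A ^ 2 = 8 ^ (2 : ℕ) * Complex.I ^ (2 : ℕ) * eps A.det ∧ A.det = 3 := by
  obtain ⟨a, b, c, ha, hau, hcu, hbu⟩ :
      ∃ a b c, A = Matrix.of ![![a, b], ![b, c]] ∧ ¬IsUnit a ∧ ¬IsUnit c ∧ IsUnit b := by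
    refine ⟨A 0 0, A 0 1, A 1 1, ?_, h00, h11, h01⟩
    ext i j
    fin_cases i <;> fin_cases j
    · rfl
    · rfl
    · exact hs
    · rfl
  subst ha
  have hdet : (Matrix.of ![![a, b], ![b, c]]).det = 3 := by
    rw [Matrix.det_fin_two]
    exact det2 a b c hau hcu hbu
  refine ⟨?_, hdet⟩
  have hGS2 : GS (Matrix.of ![![a, b], ![b, c]]) ^ 2 = GaussianInt.toComplex
      ((∑ x : Fin 2 → ZMod 4,
        gi ^ (dotProduct x ((Matrix.of ![![a, b], ![b, c]]).mulVec x)).val) ^ 2) := by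
    rw [GS_toComplex, ← map_pow]
  rw [hGS2, sq2 a b c hau hcu hbu, hdet]
  norm_num [eps, show (3 : ZMod 4) ≠ 1 from by decide, Complex.I_sq]
  exact map_ofNat GaussianInt.toComplex 64

lemma GS_split {m : Type*} [Fintype m] [DecidableEq m] (A : Matrix m m (ZMod 4))
    (hsymm : A.IsSymm) (p : m → Prop) [DecidablePred p]
    (h11 : IsUnit (A.toBlock p p).det) :
    ∃ C : Matrix {x // ¬p x} {x // ¬p x} (ZMod 4), C.IsSymm ∧
      GS A = GS (A.toBlock p p) * GS C ∧ A.det = (A.toBlock p p).det * C.det := by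
  set B₁₁ := A.toBlock p p with hB11def
  set B₁₂ := A.toBlock p (fun x => ¬p x) with hB12def
  set B₂₁ := A.toBlock (fun x => ¬p x) p with hB21def
  set B₂₂ := A.toBlock (fun x => ¬p x) (fun x => ¬p x) with hB22def
  haveI : Invertible B₁₁ := B₁₁.invertibleOfIsUnitDet h11
  set C := B₂₂ - B₂₁ * ⅟B₁₁ * B₁₂ with hCdef
  have hAe : A.submatrix (Equiv.sumCompl p) (Equiv.sumCompl p)
      = fromBlocks B₁₁ B₁₂ B₂₁ B₂₂ := by
    ext i j
    cases i <;> cases j <;> rfl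
  have hB11T : B₁₁ᵀ = B₁₁ := by
    ext i j; exact hsymm.apply _ _
  have hB12T : B₁₂ᵀ = B₂₁ := by
    ext i j; exact hsymm.apply _ _
  have hB22T : B₂₂ᵀ = B₂₂ := by
    ext i j; exact hsymm.apply _ _
  have hiT : (⅟B₁₁)ᵀ = ⅟B₁₁ := by
    symm
    apply invOf_eq_left_inv
    calc (⅟B₁₁)ᵀ * B₁₁ = (⅟B₁₁)ᵀ * B₁₁ᵀ := by rw [hB11T]
    _ = (B₁₁ * ⅟B₁₁)ᵀ := by rw [Matrix.transpose_mul]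
    _ = 1 := by rw [mul_invOf_self, Matrix.transpose_one]
  set R : Matrix ({x // p x} ⊕ {x // ¬p x}) ({x // p x} ⊕ {x // ¬p x}) (ZMod 4) :=
    fromBlocks 1 (⅟B₁₁ * B₁₂) 0 1 with hRdef
  have hRdet : IsUnit R.det := by
    rw [hRdef, Matrix.det_fromBlocks_zero₂₁]
    simp
  have hfac : fromBlocks B₁₁ B₁₂ B₂₁ B₂₂ = Rᵀ * fromBlocks B₁₁ 0 0 C * R := by
    have h1 : Rᵀ = fromBlocks 1 0 (B₂₁ * ⅟B₁₁) 1 := by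
      rw [hRdef, Matrix.fromBlocks_transpose, Matrix.transpose_one, Matrix.transpose_zero,
        Matrix.transpose_mul, hiT, hB12T]
      simp
    rw [h1, hCdef]
    exact Matrix.fromBlocks_eq_of_invertible₁₁ B₁₁ B₁₂ B₂₁ B₂₂
  have hCsymm : C.IsSymm := by
    unfold Matrix.IsSymm
    rw [hCdef, Matrix.transpose_sub, hB22T, Matrix.transpose_mul, Matrix.transpose_mul, hiT,
      hB12T, ← hB12T, Matrix.transpose_transpose, Matrix.mul_assoc]
  refine ⟨C, hCsymm, ?_, ?_⟩
  · have hg := GS_submatrix A (Equiv.sumCompl p)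
    rw [hAe, hfac, GS_congruence R _ hRdet, GS_fromBlocks] at hg
    exact hg.symm
  · have hd := Matrix.det_submatrix_equiv_self (Equiv.sumCompl p) A
    rw [hAe, hfac, Matrix.det_mul, Matrix.det_mul, Matrix.det_transpose,
      hRdef, Matrix.det_fromBlocks_zero₂₁, Matrix.det_one, Matrix.det_one,
      Matrix.det_fromBlocks_zero₂₁] at hd
    rw [← hd]
    ring

lemma GS_empty {m : Type*} [Fintype m] [DecidableEq m] (hm : IsEmpty m)
    (A : Matrix m m (ZMod 4)) : GS A = 1 := by
  unfold GS
  haveI : Unique (m → ZMod 4) := ⟨⟨fun x => hm.elim x⟩, fun f => funext fun x => hm.elim x⟩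
  rw [Fintype.sum_unique]
  simp [dotProduct, Finset.univ_eq_empty]

lemma exists_unit_entry {m : Type*} [Fintype m] [DecidableEq m] [Nonempty m]
    (A : Matrix m m (ZMod 4)) (hdet : IsUnit A.det) : ∃ i j, IsUnit (A i j) := by
  by_contra h
  push_neg at h
  set f := ZMod.castHom (show (2 : ℕ) ∣ 4 by norm_num) (ZMod 2) with hf
  have hmap : A.map f = 0 := by
    ext i j
    have hij := h i j
    simp only [Matrix.map_apply, Matrix.zero_apply]
    revert hij
    generalize A i j = a
    revert a
    decide
  have hunit : IsUnit ((A.map ⇑f).det) := by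
    have h2 := hdet.map f
    rwa [RingHom.map_det, RingHom.mapMatrix_apply] at h2
  rw [hmap, Matrix.det_zero] at hunit
  simp at hunit

set_option maxHeartbeats 1000000 in
lemma key : ∀ (N : ℕ) (m : Type) [Fintype m] [DecidableEq m] (A : Matrix m m (ZMod 4)),
    Fintype.card m ≤ N → A.IsSymm → IsUnit A.det →
    GS A ^ 2 = 8 ^ Fintype.card m * Complex.I ^ Fintype.card m * eps A.det := by
  intro N
  induction N with
  | zero =>
    intro m _ _ A hcard _ _
    haveI hem : IsEmpty m := Fintype.card_eq_zero_iff.mp (Nat.le_zero.mp hcard)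
    rw [GS_empty hem, Matrix.det_isEmpty, Fintype.card_eq_zero]
    norm_num [eps]
  | succ N ih =>
    intro m _ _ A hcard hsymm hdet
    by_cases hm0 : Fintype.card m = 0
    · haveI hem : IsEmpty m := Fintype.card_eq_zero_iff.mp hm0
      rw [GS_empty hem, Matrix.det_isEmpty, hm0]
      norm_num [eps]
    haveI : Nonempty m := Fintype.card_pos_iff.mp (Nat.pos_of_ne_zero hm0)
    by_cases hdiag : ∃ i, IsUnit (A i i)
    · obtain ⟨i, hi⟩ := hdiag
      let p : m → Prop := fun x => x = i ∨ x = i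
      haveI hdp : DecidablePred p := fun x => inferInstanceAs (Decidable (x = i ∨ x = i))
      let e₁ : Fin 1 ≃ {x // p x} :=
        ⟨fun _ => ⟨i, Or.inl rfl⟩, fun _ => 0, fun x => Subsingleton.elim _ _,
         fun x => Subtype.ext (x.2.elim id id).symm⟩
      have hcard1 : Fintype.card {x // p x} = 1 := by
        rw [← Fintype.card_congr e₁, Fintype.card_fin]
      have hcards : Fintype.card m = 1 + Fintype.card {x // ¬p x} := by
        rw [← Fintype.card_congr (Equiv.sumCompl p), Fintype.card_sum, hcard1]
      have hBdet : (A.toBlock p p).det = A i i := by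
        rw [← Matrix.det_submatrix_equiv_self e₁, Matrix.det_fin_one]
        rfl
      have h11 : IsUnit (A.toBlock p p).det := by rw [hBdet]; exact hi
      obtain ⟨C, hCs, hGS, hDet⟩ := GS_split A hsymm p h11
      have hCdet : IsUnit C.det := by
        rw [hDet] at hdet
        exact (IsUnit.mul_iff.mp hdet).2
      have hCt : Fintype.card {x // ¬p x} ≤ N := by omega
      have hC2 := ih {x // ¬p x} C hCt hCs hCdet
      have hb := base1 ((A.toBlock p p).submatrix e₁ e₁)
        (by rw [Matrix.det_submatrix_equiv_self]; exact h11)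
      rw [Matrix.det_submatrix_equiv_self, GS_submatrix] at hb
      rw [hGS, mul_pow, hb, hC2, hDet, eps_mul _ _ h11 hCdet, hcards, pow_add, pow_add]
      ring
    · push_neg at hdiag
      obtain ⟨i, j, hij⟩ := exists_unit_entry A hdet
      have hne : i ≠ j := by rintro rfl; exact hdiag i hij
      let p : m → Prop := fun x => x = i ∨ x = j
      haveI hdp : DecidablePred p := fun x => inferInstanceAs (Decidable (x = i ∨ x = j))
      let e₂ : Fin 2 ≃ {x // p x} :=
        { toFun := ![⟨i, Or.inl rfl⟩, ⟨j, Or.inr rfl⟩]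
          invFun := fun x => if x.1 = i then 0 else 1
          left_inv := by
            intro x
            fin_cases x
            · simp
            · simp [hne.symm]
          right_inv := by
            rintro ⟨x, hx | hx⟩ <;> subst hx
            · simp
            · simp only [hne.symm, if_neg]
              rfl }
      have hcard2 : Fintype.card {x // p x} = 2 := by
        rw [← Fintype.card_congr e₂, Fintype.card_fin]
      have hcards : Fintype.card m = 2 + Fintype.card {x // ¬p x} := by
        rw [← Fintype.card_congr (Equiv.sumCompl p), Fintype.card_sum, hcard2]
      set B := (A.toBlock p p).submatrix e₂ e₂ with hBdef
      have h00 : B 0 0 = A i i := rfl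
      have h01 : B 0 1 = A i j := rfl
      have h10 : B 1 0 = A j i := rfl
      have h11e : B 1 1 = A j j := rfl
      obtain ⟨hbGS, hbdet⟩ := base2 B (by rw [h10, h01]; exact hsymm.apply i j)
        (by rw [h00]; exact hdiag i) (by rw [h11e]; exact hdiag j)
        (by rw [h01]; exact hij)
      have hdetB : (A.toBlock p p).det = 3 := by
        rw [← Matrix.det_submatrix_equiv_self e₂, ← hBdef, hbdet]
      have h11 : IsUnit (A.toBlock p p).det := by rw [hdetB]; exact isUnit3
      obtain ⟨C, hCs, hGS, hDet⟩ := GS_split A hsymm p h11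
      have hCdet : IsUnit C.det := by
        rw [hDet] at hdet
        exact (IsUnit.mul_iff.mp hdet).2
      have hCt : Fintype.card {x // ¬p x} ≤ N := by omega
      have hC2 := ih {x // ¬p x} C hCt hCs hCdet
      rw [hBdef, Matrix.det_submatrix_equiv_self, GS_submatrix] at hbGS
      rw [hGS, mul_pow, hbGS, hC2, hDet, eps_mul _ _ h11 hCdet, hcards, pow_add, pow_add]
      ring

/-- For a symmetric matrix `A` over `ℤ/4ℤ` with invertible determinant, if
`4 ∣ n` and `A.det = 1` (trivial discriminant), then the Gauss sum satisfies
`S(A)² = 2^(3n)`. -/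
theorem stmt_14 (n : ℕ) (A : Matrix (Fin n) (Fin n) (ZMod 4))
    (hsymm : A.IsSymm) (hdet : IsUnit A.det)
    (hn : 4 ∣ n) (hdet1 : A.det = 1) :
    (∑ x : Fin n → ZMod 4, Complex.I ^ (dotProduct x (A.mulVec x)).val) ^ 2
      = 2 ^ (3 * n) := by
  have h := key n (Fin n) A (by rw [Fintype.card_fin]) hsymm hdet
  rw [Fintype.card_fin, hdet1] at h
  have hGSA : GS A = ∑ x : Fin n → ZMod 4, Complex.I ^ (dotProduct x (A.mulVec x)).val :=
    rfl
  rw [← hGSA, h]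
  obtain ⟨k, rfl⟩ := hn
  rw [show eps 1 = 1 from by norm_num [eps], mul_one, pow_mul Complex.I 4 k,
    Complex.I_pow_four, one_pow, mul_one, show (3 : ℕ) * (4 * k) = 3 * 4 * k by ring,
    pow_mul 2 (3 * 4) k, pow_mul 8 4 k]
  norm_num
end

section
/- Let R be a commutative ring and I an ideal of R with I² = 0, and let π : R → R⧸I be the quotient map. Let l be a finite type with decidable equality. Then the reduction map on symplectic groups is surjective: for every matrix B ∈ Matrix.symplecticGroup l (R⧸I) (i.e. Bᵀ * J * B = J for the standard symplectic matrix J over R⧸I on index type l ⊕ l), there exists A ∈ Matrix.symplecticGroup l R whose entrywise image A.map π equals B. -/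
open Matrix

/-- For a commutative ring `R` and an ideal `I` with `I² = 0`, every
symplectic matrix over `R⧸I` lifts to a symplectic matrix over `R`: the reduction map
`Sp(l, R) → Sp(l, R⧸I)` is surjective. -/
theorem stmt_17 (R : Type*) [CommRing R] (I : Ideal R) (hI : I ^ 2 = ⊥)
    (l : Type*) [Fintype l] [DecidableEq l]
    (B : Matrix (l ⊕ l) (l ⊕ l) (R ⧸ I)) (hB : B ∈ Matrix.symplecticGroup l (R ⧸ I)) :
    ∃ A ∈ Matrix.symplecticGroup l R, A.map (Ideal.Quotient.mk I) = B := by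
  classical
  set π := Ideal.Quotient.mk I with hπ
  -- products of two matrices with entries in I vanish
  have hmul0 : ∀ M N : Matrix (l ⊕ l) (l ⊕ l) R,
      (∀ i j, M i j ∈ I) → (∀ i j, N i j ∈ I) → M * N = 0 := by
    intro M N hM hN
    ext i j
    rw [Matrix.mul_apply]
    refine Finset.sum_eq_zero fun k _ => ?_
    have : M i k * N k j ∈ I ^ 2 := by
      rw [sq]; exact Ideal.mul_mem_mul (hM i k) (hN k j)
    simpa [hI] using this
  -- lift B entrywise
  set A₀ : Matrix (l ⊕ l) (l ⊕ l) R :=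
    Matrix.of fun i j => (Ideal.Quotient.mk_surjective (B i j)).choose with hA₀def
  have hA₀ : A₀.map π = B := by
    ext i j
    exact (Ideal.Quotient.mk_surjective (B i j)).choose_spec
  have hmapJ : (J l R).map π = J l (R ⧸ I) := by
    ext i j
    rcases i with a | a <;> rcases j with b | b <;>
      simp [Matrix.J, Matrix.fromBlocks, Matrix.one_apply, apply_ite π]
  -- the error term
  set E : Matrix (l ⊕ l) (l ⊕ l) R := A₀ᵀ * J l R * A₀ - J l R with hEdef
  have hEmem : ∀ i j, E i j ∈ I := by
    intro i j
    rw [← Ideal.Quotient.eq_zero_iff_mem]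
    have : E.map π = 0 := by
      have : (A₀ᵀ * J l R * A₀).map π = (A₀.map π)ᵀ * (J l R).map π * A₀.map π := by
        simp [Matrix.map_mul, Matrix.transpose_map]
      rw [hEdef, Matrix.map_sub _ (fun a b => map_sub π a b), this, hA₀, hmapJ,
        SymplecticGroup.mem_iff'.mp hB, sub_self]
    have := congrFun (congrFun this i) j
    simpa using this
  have hEanti : Eᵀ = -E := by
    have h1 : (A₀ᵀ * J l R * A₀)ᵀ = A₀ᵀ * (J l R)ᵀ * A₀ := by
      rw [Matrix.transpose_mul, Matrix.transpose_mul, Matrix.transpose_transpose,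
        Matrix.mul_assoc]
    rw [hEdef, Matrix.transpose_sub, h1, Matrix.J_transpose]
    simp only [Matrix.mul_neg, Matrix.neg_mul, neg_sub]
    abel
  have hEanti' : ∀ i j, E j i = -E i j := fun i j => by
    have := congrFun (congrFun hEanti i) j
    simpa using this
  -- diagonal of E is zero
  have hJdiag : ∀ i, J l R i i = 0 := by
    rintro (a | a) <;> simp [Matrix.J, Matrix.fromBlocks]
  have hEdiag : ∀ i, E i i = 0 := by
    intro i
    have hJA : ∀ k, (J l R * A₀) k i =
        Sum.elim (fun a => -A₀ (Sum.inr a) i) (fun a => A₀ (Sum.inl a) i) k := by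
      rintro (a | a) <;>
        simp [Matrix.mul_apply, Matrix.J, Matrix.fromBlocks, Fintype.sum_sum_type,
          Matrix.one_apply, Finset.sum_ite_eq, Finset.sum_ite_eq']
    have : (A₀ᵀ * (J l R * A₀)) i i = 0 := by
      rw [Matrix.mul_apply]
      rw [Fintype.sum_sum_type]
      simp only [hJA, Matrix.transpose_apply, Sum.elim_inl, Sum.elim_inr]
      rw [← Finset.sum_add_distrib]
      refine Finset.sum_eq_zero fun a _ => by ring
    rw [hEdef]
    simp only [Matrix.sub_apply, hJdiag, Matrix.mul_assoc]
    rw [this, sub_zero]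
  -- choose an ordering and split E
  set e := Fintype.equivFin (l ⊕ l) with he
  set Y : Matrix (l ⊕ l) (l ⊕ l) R :=
    Matrix.of fun i j => if e i < e j then -E i j else 0 with hYdef
  have hYmem : ∀ i j, Y i j ∈ I := by
    intro i j
    rw [hYdef]
    simp only [Matrix.of_apply]
    split
    · exact I.neg_mem (hEmem i j)
    · exact I.zero_mem
  have hYsplit : Y - Yᵀ = -E := by
    ext i j
    simp only [Matrix.sub_apply, Matrix.transpose_apply, Matrix.neg_apply, hYdef,
      Matrix.of_apply]
    rcases lt_trichotomy (e i) (e j) with h | h | h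
    · rw [if_pos h, if_neg (asymm h), sub_zero]
    · have hij : i = j := e.injective h
      subst hij
      simp [hEdiag i]
    · rw [if_neg (asymm h), if_pos h, zero_sub, hEanti' i j, neg_neg]
  set X : Matrix (l ⊕ l) (l ⊕ l) R := -(J l R) * Y with hXdef
  have hXmem : ∀ i j, X i j ∈ I := by
    intro i j
    rw [hXdef, Matrix.mul_apply]
    exact I.sum_mem fun k _ => I.mul_mem_left _ (hYmem k j)
  have hJX : J l R * X = Y := by
    rw [hXdef, Matrix.neg_mul, Matrix.mul_neg, ← Matrix.mul_assoc, Matrix.J_squared,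
      Matrix.neg_mul, neg_neg, Matrix.one_mul]
  have hXtJ : Xᵀ * J l R = -Yᵀ := by
    rw [hXdef, Matrix.neg_mul, Matrix.transpose_neg, Matrix.transpose_mul, Matrix.J_transpose,
      Matrix.mul_neg, neg_neg, Matrix.mul_assoc, Matrix.J_squared, Matrix.mul_neg,
      Matrix.mul_one]
  have hXtmem : ∀ i j, Xᵀ i j ∈ I := fun i j => hXmem j i
  refine ⟨A₀ * (1 + X), ?_, ?_⟩
  · rw [SymplecticGroup.mem_iff']
    have hM : A₀ᵀ * J l R * A₀ = J l R + E := by rw [hEdef]; abel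
    have hEX : E * X = 0 := hmul0 E X hEmem hXmem
    have hXtE : Xᵀ * E = 0 := hmul0 Xᵀ E hXtmem hEmem
    have hXtJX : Xᵀ * (J l R * X) = 0 := by
      rw [hJX]; exact hmul0 Xᵀ Y hXtmem hYmem
    calc (A₀ * (1 + X))ᵀ * J l R * (A₀ * (1 + X))
        = (1 + Xᵀ) * (A₀ᵀ * J l R * A₀) * (1 + X) := by
          rw [Matrix.transpose_mul, Matrix.transpose_add, Matrix.transpose_one]
          noncomm_ring
      _ = (1 + Xᵀ) * (J l R + E) * (1 + X) := by rw [hM]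
      _ = J l R + E + J l R * X + Xᵀ * J l R
          + (Xᵀ * E + E * X + Xᵀ * (J l R * X) + Xᵀ * (E * X)) := by noncomm_ring
      _ = J l R + E + Y + -Yᵀ + (0 + 0 + 0 + 0) := by
          rw [hEX, hXtE, hXtJX, Matrix.mul_zero, hJX, hXtJ]
      _ = J l R + (E + (Y - Yᵀ)) := by abel
      _ = J l R := by rw [hYsplit]; abel
  · have h1X : (1 + X).map π = 1 := by
      ext i j
      have hx : π (X i j) = 0 := (Ideal.Quotient.eq_zero_iff_mem).mpr (hXmem i j)
      simp [Matrix.map_apply, Matrix.add_apply, Matrix.one_apply, apply_ite π, hx]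
    rw [Matrix.map_mul, h1X, Matrix.mul_one, hA₀]
end
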